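/- arXiv:2406.06168 — 4 statements merged into one kernel-verified Lean document; each statement's English description precedes it below -/
import Mathlib

section
/- Let (X_t)_{t∈ℤ} be a centered stationary sequence of real-valued random variables with β-mixing coefficients (β(q))_{q≥1}, such that |X_t| ≤ M almost surely. Then for every n ∈ ℕ*, (1/n) E( (Σ_{j=1}^n X_j)² ) ≤ 4M² ∫_0^1 β^{-1}(u) du, where β^{-1}(u) = Σ_{k∈ℕ} 1_{β(k) > u} with the convention β(0) = 1. -/
open MeasureTheory ProbabilityTheory
open scoped ENNReal

noncomputable section

/-- β-dependence coefficient between two sub-σ-algebras. -/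
def betaDep {Ω : Type*} [MeasurableSpace Ω] (P : Measure Ω)
    (A B : MeasurableSpace Ω) : ℝ :=
  sSup {r : ℝ | ∃ (I J : ℕ) (As : Fin I → Set Ω) (Bs : Fin J → Set Ω),
    (∀ i, MeasurableSet[A] (As i)) ∧ (∀ j, MeasurableSet[B] (Bs j)) ∧
    Pairwise (Function.onFun Disjoint As) ∧ (⋃ i, As i) = Set.univ ∧
    Pairwise (Function.onFun Disjoint Bs) ∧ (⋃ j, Bs j) = Set.univ ∧
    r = 2⁻¹ * ∑ i, ∑ j,
      |(P (As i ∩ Bs j)).toReal - (P (As i)).toReal * (P (Bs j)).toReal|}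

/-- β-mixing coefficient of order `q` of a ℤ-indexed sequence. -/
def betaMixZ {Ω E : Type*} [MeasurableSpace Ω] [MeasurableSpace E]
    (P : Measure Ω) (X : ℤ → Ω → E) (q : ℕ) : ℝ :=
  ⨆ t : ℤ, betaDep P
    (⨆ s : {s : ℤ // s ≤ t}, MeasurableSpace.comap (X s) inferInstance)
    (⨆ s : {s : ℤ // t + q ≤ s}, MeasurableSpace.comap (X s) inferInstance)

/-- Stationarity of a ℤ-indexed sequence: every shift leaves the joint law invariant. -/
def StationaryZ {Ω E : Type*} [MeasurableSpace Ω] [MeasurableSpace E]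
    (P : Measure Ω) (X : ℤ → Ω → E) : Prop :=
  ∀ h : ℤ, Measure.map (fun ω (t : ℤ) => X (t + h) ω) P =
    Measure.map (fun ω (t : ℤ) => X t ω) P

def betaDepSet {Ω : Type*} [MeasurableSpace Ω] (P : Measure Ω)
    (A B : MeasurableSpace Ω) : Set ℝ :=
  {r : ℝ | ∃ (I J : ℕ) (As : Fin I → Set Ω) (Bs : Fin J → Set Ω),
    (∀ i, MeasurableSet[A] (As i)) ∧ (∀ j, MeasurableSet[B] (Bs j)) ∧
    Pairwise (Function.onFun Disjoint As) ∧ (⋃ i, As i) = Set.univ ∧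
    Pairwise (Function.onFun Disjoint Bs) ∧ (⋃ j, Bs j) = Set.univ ∧
    r = 2⁻¹ * ∑ i, ∑ j,
      |(P (As i ∩ Bs j)).toReal - (P (As i)).toReal * (P (Bs j)).toReal|}

lemma betaDep_eq {Ω : Type*} (A B : MeasurableSpace Ω) [m0 : MeasurableSpace Ω]
    (P : Measure Ω) : @betaDep Ω m0 P A B = sSup (@betaDepSet Ω m0 P A B) := rfl

variable {Ω : Type*}

lemma zero_mem_betaDepSet (A B : MeasurableSpace Ω) [m0 : MeasurableSpace Ω]
    (P : Measure Ω) [IsProbabilityMeasure P] : (0:ℝ) ∈ @betaDepSet Ω m0 P A B := by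
  refine ⟨1, 1, fun _ => Set.univ, fun _ => Set.univ, fun _ => MeasurableSet.univ,
    fun _ => MeasurableSet.univ, Subsingleton.pairwise, by simp [Set.iUnion_const], Subsingleton.pairwise, by simp [Set.iUnion_const], ?_⟩
  simp

lemma sum_inter_partition [m0 : MeasurableSpace Ω] (P : Measure Ω) [IsProbabilityMeasure P]
    (s : Set Ω) (hs : MeasurableSet s) {J : ℕ} (Bs : Fin J → Set Ω)
    (hBs : ∀ j, MeasurableSet (Bs j)) (hdisj : Pairwise (Function.onFun Disjoint Bs))
    (hcov : (⋃ j, Bs j) = Set.univ) :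
    ∑ j, (P (s ∩ Bs j)).toReal = (P s).toReal := by
  have h1 : P s = ∑ j, P (s ∩ Bs j) := by
    have hseq : s = ⋃ j, s ∩ Bs j := by rw [← Set.inter_iUnion, hcov, Set.inter_univ]
    have hd : Pairwise (Function.onFun Disjoint (fun j => s ∩ Bs j)) := fun i j hij =>
      (hdisj hij).mono Set.inter_subset_right Set.inter_subset_right
    calc P s = P (⋃ j, s ∩ Bs j) := by rw [← hseq]
      _ = ∑' j, P (s ∩ Bs j) := measure_iUnion hd (fun j => hs.inter (hBs j))
      _ = ∑ j, P (s ∩ Bs j) := tsum_fintype _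
  rw [h1, ENNReal.toReal_sum (fun j _ => measure_ne_top P _)]

lemma betaDepSet_subset_Icc {A B : MeasurableSpace Ω} [m0 : MeasurableSpace Ω]
    (P : Measure Ω) [IsProbabilityMeasure P] (hA : A ≤ m0) (hB : B ≤ m0) :
    @betaDepSet Ω m0 P A B ⊆ Set.Iic (1:ℝ) := by
  rintro r ⟨I, J, As, Bs, hAs, hBs, hdA, hcA, hdB, hcB, rfl⟩
  have hAm : ∀ i, MeasurableSet (As i) := fun i => hA _ (hAs i)
  have hBm : ∀ j, MeasurableSet (Bs j) := fun j => hB _ (hBs j)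
  have hsum1 : ∑ i, ∑ j, (P (As i ∩ Bs j)).toReal = 1 := by
    have : ∀ i, ∑ j, (P (As i ∩ Bs j)).toReal = (P (As i)).toReal :=
      fun i => sum_inter_partition P _ (hAm i) Bs hBm hdB hcB
    simp_rw [this]
    have := sum_inter_partition P Set.univ MeasurableSet.univ As hAm hdA hcA
    simpa using this
  have hsA : ∑ i, (P (As i)).toReal = 1 := by
    have := sum_inter_partition P Set.univ MeasurableSet.univ As hAm hdA hcA
    simpa using this
  have hsB : ∑ j, (P (Bs j)).toReal = 1 := by
    have := sum_inter_partition P Set.univ MeasurableSet.univ Bs hBm hdB hcB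
    simpa using this
  have hbound : ∑ i, ∑ j, |(P (As i ∩ Bs j)).toReal - (P (As i)).toReal * (P (Bs j)).toReal|
      ≤ 2 := by
    have : ∀ i j, |(P (As i ∩ Bs j)).toReal - (P (As i)).toReal * (P (Bs j)).toReal|
        ≤ (P (As i ∩ Bs j)).toReal + (P (As i)).toReal * (P (Bs j)).toReal := by
      intro i j
      have h1 : (0:ℝ) ≤ (P (As i ∩ Bs j)).toReal := ENNReal.toReal_nonneg
      have h2 : (0:ℝ) ≤ (P (As i)).toReal * (P (Bs j)).toReal :=
        mul_nonneg ENNReal.toReal_nonneg ENNReal.toReal_nonneg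
      calc |(P (As i ∩ Bs j)).toReal - (P (As i)).toReal * (P (Bs j)).toReal|
          ≤ |(P (As i ∩ Bs j)).toReal| + |(P (As i)).toReal * (P (Bs j)).toReal| :=
            abs_sub _ _
        _ = _ := by rw [abs_of_nonneg h1, abs_of_nonneg h2]
    calc ∑ i, ∑ j, |(P (As i ∩ Bs j)).toReal - (P (As i)).toReal * (P (Bs j)).toReal|
        ≤ ∑ i, ∑ j, ((P (As i ∩ Bs j)).toReal + (P (As i)).toReal * (P (Bs j)).toReal) := by
          refine Finset.sum_le_sum fun i _ => Finset.sum_le_sum fun j _ => this i j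
      _ = 2 := by
          simp_rw [Finset.sum_add_distrib, ← Finset.mul_sum, hsB, mul_one, hsum1, hsA]
          norm_num
  simp only [Set.mem_Iic]
  linarith

lemma betaDep_le_one {A B : MeasurableSpace Ω} [m0 : MeasurableSpace Ω]
    (P : Measure Ω) [IsProbabilityMeasure P] (hA : A ≤ m0) (hB : B ≤ m0) :
    @betaDep Ω m0 P A B ≤ 1 :=
  csSup_le ⟨0, zero_mem_betaDepSet A B P⟩ (fun _ hr => betaDepSet_subset_Icc P hA hB hr)

lemma betaDep_bddAbove {A B : MeasurableSpace Ω} [m0 : MeasurableSpace Ω]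
    (P : Measure Ω) [IsProbabilityMeasure P] (hA : A ≤ m0) (hB : B ≤ m0) :
    BddAbove (@betaDepSet Ω m0 P A B) :=
  ⟨1, fun _ hr => betaDepSet_subset_Icc P hA hB hr⟩

lemma betaDep_nonneg {A B : MeasurableSpace Ω} [m0 : MeasurableSpace Ω]
    (P : Measure Ω) [IsProbabilityMeasure P] (hA : A ≤ m0) (hB : B ≤ m0) :
    0 ≤ @betaDep Ω m0 P A B :=
  le_csSup (betaDep_bddAbove P hA hB) (zero_mem_betaDepSet A B P)

lemma betaDep_mono {A A' B B' : MeasurableSpace Ω} [m0 : MeasurableSpace Ω]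
    (P : Measure Ω) [IsProbabilityMeasure P] (hA : A ≤ m0) (hB : B ≤ m0)
    (hA' : A' ≤ A) (hB' : B' ≤ B) : @betaDep Ω m0 P A' B' ≤ @betaDep Ω m0 P A B := by
  refine csSup_le_csSup (betaDep_bddAbove P hA hB) ⟨0, zero_mem_betaDepSet A' B' P⟩ ?_
  rintro r ⟨I, J, As, Bs, hAs, hBs, h⟩
  exact ⟨I, J, As, Bs, fun i => hA' _ (hAs i), fun j => hB' _ (hBs j), h⟩


def gridVal (M : ℝ) (m : ℕ) (i : Fin m) : ℝ := -M + (2*M/m) * i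

def gridIdx (M : ℝ) {m : ℕ} (hm : 0 < m) (x : ℝ) : Fin m :=
  ⟨min (m-1) ⌊(x+M)/(2*M/m)⌋₊, by omega⟩

lemma abs_gridVal_le {M : ℝ} (hM : 0 ≤ M) {m : ℕ} (hm : 0 < m) (i : Fin m) :
    |gridVal M m i| ≤ M := by
  have hm' : (0:ℝ) < m := by exact_mod_cast hm
  have h1 : (0:ℝ) ≤ 2*M/m := by positivity
  have h2 : (i : ℝ) ≤ m := by exact_mod_cast (i.isLt.le)
  have h3 : (0:ℝ) ≤ (i:ℝ) := Nat.cast_nonneg _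
  have h4 : (2*M/m) * i ≤ (2*M/m) * m := by nlinarith
  have h5 : (2*M/m) * m = 2*M := by field_simp
  rw [gridVal, abs_le]
  constructor <;> nlinarith

lemma measurable_gridIdx (M : ℝ) {m : ℕ} (hm : 0 < m) : Measurable (gridIdx M hm) := by
  have h1 : Measurable fun x : ℝ => (x+M)/(2*M/m) := by measurability
  have h2 : Measurable fun x : ℝ => ⌊(x+M)/(2*M/m)⌋₊ := Nat.measurable_floor.comp h1
  exact (measurable_from_nat (f := fun k => (⟨min (m-1) k, by omega⟩ : Fin m))).comp h2

lemma gridIdx_est {M : ℝ} (hM : 0 < M) {m : ℕ} (hm : 0 < m) {x : ℝ} (hx : |x| ≤ M) :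
    |x - gridVal M m (gridIdx M hm x)| ≤ 2*M/m := by
  have hm' : (0:ℝ) < m := by exact_mod_cast hm
  have hδ : (0:ℝ) < 2*M/m := by positivity
  have hxl : -M ≤ x := (abs_le.mp hx).1
  have hxu : x ≤ M := (abs_le.mp hx).2
  have ht0 : 0 ≤ (x+M)/(2*M/m) := div_nonneg (by linarith) hδ.le
  have hmm : (m:ℝ) * (2*M/m) = 2*M := by field_simp
  have htm : (x+M)/(2*M/m) ≤ m := by
    rw [div_le_iff₀ hδ, hmm]; linarith
  set k := ⌊(x+M)/(2*M/m)⌋₊ with hk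
  have hk1 : (k:ℝ) ≤ (x+M)/(2*M/m) := Nat.floor_le ht0
  have hk2 : (x+M)/(2*M/m) < k + 1 := Nat.lt_floor_add_one _
  have hxMt : x + M = (2*M/m) * ((x+M)/(2*M/m)) := by rw [mul_div_cancel₀ _ hδ.ne.symm]
  rcases le_or_gt k (m-1) with h | h
  · have hmin : min (m-1) k = k := min_eq_right h
    have hval : gridVal M m (gridIdx M hm x) = -M + (2*M/m) * k := by
      simp only [gridVal, gridIdx, ← hk, hmin]
    rw [hval, abs_le]
    constructor
    · nlinarith [mul_lt_mul_of_pos_left hk2 hδ]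
    · nlinarith [mul_le_mul_of_nonneg_left hk1 hδ.le]
  · have hmk : m ≤ k := by omega
    have htk : ((x+M)/(2*M/m)) = (m:ℝ) :=
      le_antisymm htm (le_trans (by exact_mod_cast hmk) hk1)
    have hmin : min (m-1) k = m-1 := min_eq_left (by omega)
    have hcast : ((m-1:ℕ):ℝ) = (m:ℝ) - 1 := by
      have := Nat.cast_sub (R := ℝ) hm
      simpa using this
    have hval : gridVal M m (gridIdx M hm x) = -M + (2*M/m) * ((m:ℝ)-1) := by
      simp only [gridVal, gridIdx, ← hk, hmin, hcast]
    have hxM : x + M = (2*M/m) * m := by rw [hxMt, htk]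
    have hh : x - (-M + (2*M/m)*((m:ℝ)-1)) = 2*M/m := by linear_combination hxM
    rw [hval, hh, abs_of_nonneg hδ.le]


variable {Ω : Type*}

lemma eval_eq_sum_indicator {I : ℕ} (cf : Ω → Fin I) (a : Fin I → ℝ) (ω : Ω) :
    a (cf ω) = ∑ i, (cf ⁻¹' {i}).indicator (fun _ => a i) ω := by
  rw [Finset.sum_eq_single (cf ω)]
  · simp [Set.indicator]
  · intro i _ hi
    simp only [Set.indicator, Set.mem_preimage, Set.mem_singleton_iff]
    rw [if_neg (fun h => hi h.symm)]
  · simp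

lemma eval2_eq_sum_indicator {I J : ℕ} (cf : Ω → Fin I) (cg : Ω → Fin J)
    (a : Fin I → ℝ) (b : Fin J → ℝ) (ω : Ω) :
    a (cf ω) * b (cg ω) =
      ∑ i, ∑ j, ((cf ⁻¹' {i}) ∩ (cg ⁻¹' {j})).indicator (fun _ => a i * b j) ω := by
  rw [eval_eq_sum_indicator cf a ω, eval_eq_sum_indicator cg b ω, Finset.sum_mul_sum]
  refine Finset.sum_congr rfl fun i _ => Finset.sum_congr rfl fun j _ => ?_
  exact (Set.inter_indicator_mul (fun _ => a i) (fun _ => b j) ω).symm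

variable [m0 : MeasurableSpace Ω] (P : Measure Ω) [IsProbabilityMeasure P]

lemma integral_comp_fin {I : ℕ} (cf : Ω → Fin I) (hcf : Measurable cf) (a : Fin I → ℝ) :
    ∫ ω, a (cf ω) ∂P = ∑ i, a i * (P (cf ⁻¹' {i})).toReal := by
  have h1 : ∀ ω, a (cf ω) = ∑ i, (cf ⁻¹' {i}).indicator (fun _ => a i) ω :=
    eval_eq_sum_indicator cf a
  simp_rw [h1]
  rw [integral_finset_sum]
  · refine Finset.sum_congr rfl fun i _ => ?_
    rw [integral_indicator_const _ (hcf (measurableSet_singleton i))]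
    simp [mul_comm]
    exact Or.inl rfl
  · intro i _
    exact (integrable_const (a i)).indicator (hcf (measurableSet_singleton i))

lemma integral_comp_fin2 {I J : ℕ} (cf : Ω → Fin I) (cg : Ω → Fin J)
    (hcf : Measurable cf) (hcg : Measurable cg) (a : Fin I → ℝ) (b : Fin J → ℝ) :
    ∫ ω, a (cf ω) * b (cg ω) ∂P =
      ∑ i, ∑ j, (a i * b j) * (P ((cf ⁻¹' {i}) ∩ (cg ⁻¹' {j}))).toReal := by
  have h1 : ∀ ω, a (cf ω) * b (cg ω) =
      ∑ i, ∑ j, ((cf ⁻¹' {i}) ∩ (cg ⁻¹' {j})).indicator (fun _ => a i * b j) ω :=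
    eval2_eq_sum_indicator cf cg a b
  simp_rw [h1]
  have hmeas : ∀ (i : Fin I) (j : Fin J), MeasurableSet ((cf ⁻¹' {i}) ∩ (cg ⁻¹' {j})) :=
    fun i j => (hcf (measurableSet_singleton i)).inter (hcg (measurableSet_singleton j))
  rw [integral_finset_sum]
  · refine Finset.sum_congr rfl fun i _ => ?_
    rw [integral_finset_sum]
    · refine Finset.sum_congr rfl fun j _ => ?_
      rw [integral_indicator_const _ (hmeas i j)]
      simp [mul_comm]
      exact Or.inl rfl
    · exact fun j _ => (integrable_const (a i * b j)).indicator (hmeas i j)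
  · intro i _
    exact integrable_finset_sum _ fun j _ =>
      (integrable_const (a i * b j)).indicator (hmeas i j)


section CovBound

lemma real_le_of_forall_pos {a b : ℝ} (h : ∀ ε : ℝ, 0 < ε → a ≤ b + ε) : a ≤ b := by
  by_contra hc
  push_neg at hc
  have := h ((a-b)/2) (by linarith)
  linarith

lemma integrable_of_ae_abs_le {Ω : Type*} [m0 : MeasurableSpace Ω] (P : Measure Ω)
    [IsProbabilityMeasure P] {f : Ω → ℝ} (hfm : AEStronglyMeasurable f P) {C : ℝ}
    (h : ∀ᵐ ω ∂P, |f ω| ≤ C) : Integrable f P :=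
  (integrable_const C).mono' hfm (by simpa [Real.norm_eq_abs] using h)

lemma abs_integral_le_of_ae {Ω : Type*} [m0 : MeasurableSpace Ω] (P : Measure Ω)
    [IsProbabilityMeasure P] {f : Ω → ℝ} {C : ℝ}
    (h : ∀ᵐ ω ∂P, |f ω| ≤ C) : |∫ ω, f ω ∂P| ≤ C := by
  have := norm_integral_le_of_norm_le_const (μ := P) (f := f) (C := C)
    (by simpa [Real.norm_eq_abs] using h)
  simpa [Real.norm_eq_abs] using this

lemma abs_cov_simple_le {Ω : Type*} (A B : MeasurableSpace Ω) [m0 : MeasurableSpace Ω]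
    (P : Measure Ω) [IsProbabilityMeasure P] (hA : A ≤ m0) (hB : B ≤ m0)
    {I J : ℕ} (cf : Ω → Fin I) (cg : Ω → Fin J)
    (hcf : @Measurable Ω (Fin I) A _ cf) (hcg : @Measurable Ω (Fin J) B _ cg)
    (a : Fin I → ℝ) (b : Fin J → ℝ) {Mr : ℝ} (hMr : 0 ≤ Mr)
    (ha : ∀ i, |a i| ≤ Mr) (hb : ∀ j, |b j| ≤ Mr) :
    |∫ ω, a (cf ω) * b (cg ω) ∂P - (∫ ω, a (cf ω) ∂P) * (∫ ω, b (cg ω) ∂P)|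
      ≤ 2 * Mr^2 * @betaDep Ω m0 P A B := by
  have hcf0 : Measurable cf := hcf.mono hA le_rfl
  have hcg0 : Measurable cg := hcg.mono hB le_rfl
  rw [integral_comp_fin P cf hcf0 a, integral_comp_fin P cg hcg0 b,
      integral_comp_fin2 P cf cg hcf0 hcg0 a b, Finset.sum_mul_sum]
  have hr0mem : (2⁻¹ * ∑ i, ∑ j, |(P ((cf ⁻¹' {i}) ∩ (cg ⁻¹' {j}))).toReal
      - (P (cf ⁻¹' {i})).toReal * (P (cg ⁻¹' {j})).toReal|) ∈ @betaDepSet Ω m0 P A B := by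
    refine ⟨I, J, fun i => cf ⁻¹' {i}, fun j => cg ⁻¹' {j},
      fun i => hcf (measurableSet_singleton i), fun j => hcg (measurableSet_singleton j),
      ?_, ?_, ?_, ?_, rfl⟩
    · intro i j hij
      refine Set.disjoint_left.mpr fun ω h1 h2 => hij ?_
      simp only [Set.mem_preimage, Set.mem_singleton_iff] at h1 h2
      rw [← h1, ← h2]
    · exact Set.eq_univ_iff_forall.mpr fun ω => Set.mem_iUnion.mpr ⟨cf ω, rfl⟩
    · intro i j hij
      refine Set.disjoint_left.mpr fun ω h1 h2 => hij ?_
      simp only [Set.mem_preimage, Set.mem_singleton_iff] at h1 h2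
      rw [← h1, ← h2]
    · exact Set.eq_univ_iff_forall.mpr fun ω => Set.mem_iUnion.mpr ⟨cg ω, rfl⟩
  have hsup := le_csSup (betaDep_bddAbove P hA hB) hr0mem
  have habs : |∑ i, ∑ j, (a i * b j) * (P ((cf ⁻¹' {i}) ∩ (cg ⁻¹' {j}))).toReal
      - ∑ i, ∑ j, (a i * (P (cf ⁻¹' {i})).toReal) * (b j * (P (cg ⁻¹' {j})).toReal)|
      ≤ Mr^2 * ∑ i, ∑ j, |(P ((cf ⁻¹' {i}) ∩ (cg ⁻¹' {j}))).toReal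
      - (P (cf ⁻¹' {i})).toReal * (P (cg ⁻¹' {j})).toReal| := by
    rw [← Finset.sum_sub_distrib]
    simp_rw [← Finset.sum_sub_distrib]
    calc |∑ i, ∑ j, ((a i * b j) * (P ((cf ⁻¹' {i}) ∩ (cg ⁻¹' {j}))).toReal
          - (a i * (P (cf ⁻¹' {i})).toReal) * (b j * (P (cg ⁻¹' {j})).toReal))|
        ≤ ∑ i, |∑ j, ((a i * b j) * (P ((cf ⁻¹' {i}) ∩ (cg ⁻¹' {j}))).toReal
          - (a i * (P (cf ⁻¹' {i})).toReal) * (b j * (P (cg ⁻¹' {j})).toReal))| :=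
          Finset.abs_sum_le_sum_abs _ _
      _ ≤ ∑ i, ∑ j, |(a i * b j) * (P ((cf ⁻¹' {i}) ∩ (cg ⁻¹' {j}))).toReal
          - (a i * (P (cf ⁻¹' {i})).toReal) * (b j * (P (cg ⁻¹' {j})).toReal)| :=
          Finset.sum_le_sum fun i _ => Finset.abs_sum_le_sum_abs _ _
      _ ≤ ∑ i, ∑ j, Mr^2 * |(P ((cf ⁻¹' {i}) ∩ (cg ⁻¹' {j}))).toReal
          - (P (cf ⁻¹' {i})).toReal * (P (cg ⁻¹' {j})).toReal| := by
          refine Finset.sum_le_sum fun i _ => Finset.sum_le_sum fun j _ => ?_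
          have heq : (a i * b j) * (P ((cf ⁻¹' {i}) ∩ (cg ⁻¹' {j}))).toReal
              - (a i * (P (cf ⁻¹' {i})).toReal) * (b j * (P (cg ⁻¹' {j})).toReal)
              = (a i * b j) * ((P ((cf ⁻¹' {i}) ∩ (cg ⁻¹' {j}))).toReal
              - (P (cf ⁻¹' {i})).toReal * (P (cg ⁻¹' {j})).toReal) := by ring
          rw [heq, abs_mul, abs_mul]
          have h1 : |a i| * |b j| ≤ Mr * Mr :=
            mul_le_mul (ha i) (hb j) (abs_nonneg _) hMr
          have h2 : (0:ℝ) ≤ |(P ((cf ⁻¹' {i}) ∩ (cg ⁻¹' {j}))).toReal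
              - (P (cf ⁻¹' {i})).toReal * (P (cg ⁻¹' {j})).toReal| := abs_nonneg _
          nlinarith
      _ = Mr^2 * ∑ i, ∑ j, |(P ((cf ⁻¹' {i}) ∩ (cg ⁻¹' {j}))).toReal
          - (P (cf ⁻¹' {i})).toReal * (P (cg ⁻¹' {j})).toReal| := by
          simp_rw [← Finset.mul_sum]
  have h2 : Mr^2 * ∑ i, ∑ j, |(P ((cf ⁻¹' {i}) ∩ (cg ⁻¹' {j}))).toReal
      - (P (cf ⁻¹' {i})).toReal * (P (cg ⁻¹' {j})).toReal| ≤ 2 * Mr^2 * @betaDep Ω m0 P A B := by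
    rw [betaDep_eq A B P]
    nlinarith [mul_le_mul_of_nonneg_left hsup (by positivity : (0:ℝ) ≤ 2*Mr^2)]
  exact le_trans habs h2

lemma cov_bound {Ω : Type*} (A B : MeasurableSpace Ω) [m0 : MeasurableSpace Ω]
    (P : Measure Ω) [IsProbabilityMeasure P] (hA : A ≤ m0) (hB : B ≤ m0) (f g : Ω → ℝ)
    (hf : @Measurable Ω ℝ A _ f) (hg : @Measurable Ω ℝ B _ g)
    {Mr : ℝ} (hMr : 0 ≤ Mr) (hfM : ∀ᵐ ω ∂P, |f ω| ≤ Mr) (hgM : ∀ᵐ ω ∂P, |g ω| ≤ Mr) :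
    |∫ ω, f ω * g ω ∂P - (∫ ω, f ω ∂P) * (∫ ω, g ω ∂P)| ≤ 2 * Mr^2 * @betaDep Ω m0 P A B := by
  have hf0 : Measurable f := hf.mono hA le_rfl
  have hg0 : Measurable g := hg.mono hB le_rfl
  rcases hMr.eq_or_lt with h0 | hMrpos
  · have hfz : f =ᵐ[P] 0 := by
      filter_upwards [hfM] with ω hω
      have : |f ω| ≤ 0 := by rw [h0]; exact hω
      simpa [abs_nonpos_iff] using this
    have hfgz : (fun ω => f ω * g ω) =ᵐ[P] 0 := by
      filter_upwards [hfz] with ω hω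
      simp [hω]
    rw [integral_congr_ae hfz, integral_congr_ae hfgz]
    simp [← h0]
  · apply real_le_of_forall_pos
    intro ε hε
    set m : ℕ := ⌈8*Mr^2/ε⌉₊ + 1 with hmdef
    have hm : 0 < m := Nat.succ_pos _
    have hmR : 8*Mr^2/ε ≤ (m:ℝ) := by
      calc 8*Mr^2/ε ≤ (⌈8*Mr^2/ε⌉₊ : ℝ) := Nat.le_ceil _
        _ ≤ (m:ℝ) := by exact_mod_cast Nat.le_succ _
    have hmR' : (0:ℝ) < m := by exact_mod_cast hm
    have hδpos : (0:ℝ) < 2*Mr/m := by positivity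
    set f' : Ω → ℝ := fun ω => gridVal Mr m (gridIdx Mr hm (f ω)) with hf'def
    set g' : Ω → ℝ := fun ω => gridVal Mr m (gridIdx Mr hm (g ω)) with hg'def
    have hf'bd : ∀ ω, |f' ω| ≤ Mr := fun ω => abs_gridVal_le hMr hm _
    have hg'bd : ∀ ω, |g' ω| ≤ Mr := fun ω => abs_gridVal_le hMr hm _
    have hf'close : ∀ᵐ ω ∂P, |f ω - f' ω| ≤ 2*Mr/m := by
      filter_upwards [hfM] with ω hω
      exact gridIdx_est hMrpos hm hω
    have hg'close : ∀ᵐ ω ∂P, |g ω - g' ω| ≤ 2*Mr/m := by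
      filter_upwards [hgM] with ω hω
      exact gridIdx_est hMrpos hm hω
    have hf'0 : Measurable f' :=
      (measurable_of_countable (gridVal Mr m)).comp ((measurable_gridIdx Mr hm).comp hf0)
    have hg'0 : Measurable g' :=
      (measurable_of_countable (gridVal Mr m)).comp ((measurable_gridIdx Mr hm).comp hg0)
    -- covariance bound for the simple versions
    have hcov : |∫ ω, f' ω * g' ω ∂P - (∫ ω, f' ω ∂P) * (∫ ω, g' ω ∂P)|
        ≤ 2 * Mr^2 * @betaDep Ω m0 P A B := by
      exact abs_cov_simple_le A B P hA hB
        (fun ω => gridIdx Mr hm (f ω)) (fun ω => gridIdx Mr hm (g ω))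
        ((measurable_gridIdx Mr hm).comp hf)
        ((measurable_gridIdx Mr hm).comp hg)
        (gridVal Mr m) (gridVal Mr m) hMr
        (abs_gridVal_le hMr hm) (abs_gridVal_le hMr hm)
    -- integrability
    have hfi : Integrable f P := integrable_of_ae_abs_le P hf0.aestronglyMeasurable hfM
    have hgi : Integrable g P := integrable_of_ae_abs_le P hg0.aestronglyMeasurable hgM
    have hf'i : Integrable f' P := integrable_of_ae_abs_le P hf'0.aestronglyMeasurable
      (Filter.Eventually.of_forall hf'bd)
    have hg'i : Integrable g' P := integrable_of_ae_abs_le P hg'0.aestronglyMeasurable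
      (Filter.Eventually.of_forall hg'bd)
    have hfgi : Integrable (fun ω => f ω * g ω) P :=
      integrable_of_ae_abs_le P (hf0.mul hg0).aestronglyMeasurable
        (by filter_upwards [hfM, hgM] with ω h1 h2
            rw [abs_mul]
            exact mul_le_mul h1 h2 (abs_nonneg _) hMr)
    have hf'g'i : Integrable (fun ω => f' ω * g' ω) P :=
      integrable_of_ae_abs_le P (hf'0.mul hg'0).aestronglyMeasurable
        (Filter.Eventually.of_forall fun ω => by
          rw [abs_mul]
          exact mul_le_mul (hf'bd ω) (hg'bd ω) (abs_nonneg _) hMr)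
    -- error bounds
    have E1 : |∫ ω, f ω * g ω ∂P - ∫ ω, f' ω * g' ω ∂P| ≤ 2*Mr*(2*Mr/m) := by
      rw [← integral_sub hfgi hf'g'i]
      refine abs_integral_le_of_ae P ?_
      filter_upwards [hfM, hf'close, hg'close] with ω h1 h2 h3
      have heq : f ω * g ω - f' ω * g' ω
          = f ω * (g ω - g' ω) + (f ω - f' ω) * g' ω := by ring
      rw [heq]
      calc |f ω * (g ω - g' ω) + (f ω - f' ω) * g' ω|
          ≤ |f ω * (g ω - g' ω)| + |(f ω - f' ω) * g' ω| := abs_add_le _ _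
        _ ≤ Mr*(2*Mr/m) + (2*Mr/m)*Mr := by
            rw [abs_mul, abs_mul]
            exact add_le_add (mul_le_mul h1 h3 (abs_nonneg _) hMr)
              (mul_le_mul h2 (hg'bd ω) (abs_nonneg _) hδpos.le)
        _ = 2*Mr*(2*Mr/m) := by ring
    have E2 : |∫ ω, f ω ∂P - ∫ ω, f' ω ∂P| ≤ 2*Mr/m := by
      rw [← integral_sub hfi hf'i]
      exact abs_integral_le_of_ae P hf'close
    have E3 : |∫ ω, g ω ∂P - ∫ ω, g' ω ∂P| ≤ 2*Mr/m := by
      rw [← integral_sub hgi hg'i]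
      exact abs_integral_le_of_ae P hg'close
    have F1 : |∫ ω, f' ω ∂P| ≤ Mr :=
      abs_integral_le_of_ae P (Filter.Eventually.of_forall hf'bd)
    have F2 : |∫ ω, g ω ∂P| ≤ Mr := abs_integral_le_of_ae P hgM
    have E4 : |(∫ ω, f' ω ∂P) * (∫ ω, g' ω ∂P) - (∫ ω, f ω ∂P) * (∫ ω, g ω ∂P)|
        ≤ 2*Mr*(2*Mr/m) := by
      have heq : (∫ ω, f' ω ∂P) * (∫ ω, g' ω ∂P) - (∫ ω, f ω ∂P) * (∫ ω, g ω ∂P)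
          = (∫ ω, f' ω ∂P) * ((∫ ω, g' ω ∂P) - ∫ ω, g ω ∂P)
            + ((∫ ω, f' ω ∂P) - ∫ ω, f ω ∂P) * (∫ ω, g ω ∂P) := by ring
      rw [heq]
      calc _ ≤ |(∫ ω, f' ω ∂P) * ((∫ ω, g' ω ∂P) - ∫ ω, g ω ∂P)|
            + |((∫ ω, f' ω ∂P) - ∫ ω, f ω ∂P) * (∫ ω, g ω ∂P)| := abs_add_le _ _
        _ ≤ Mr*(2*Mr/m) + (2*Mr/m)*Mr := by
            rw [abs_mul, abs_mul]
            have E3' : |(∫ ω, g' ω ∂P) - ∫ ω, g ω ∂P| ≤ 2*Mr/m := by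
              rw [abs_sub_comm]; exact E3
            have E2' : |(∫ ω, f' ω ∂P) - ∫ ω, f ω ∂P| ≤ 2*Mr/m := by
              rw [abs_sub_comm]; exact E2
            exact add_le_add (mul_le_mul F1 E3' (abs_nonneg _) hMr)
              (mul_le_mul E2' F2 (abs_nonneg _) hδpos.le)
        _ = 2*Mr*(2*Mr/m) := by ring
    have hfinal : |∫ ω, f ω * g ω ∂P - (∫ ω, f ω ∂P) * (∫ ω, g ω ∂P)|
        ≤ 2 * Mr^2 * @betaDep Ω m0 P A B + 4*Mr*(2*Mr/m) := by
      have htri : |∫ ω, f ω * g ω ∂P - (∫ ω, f ω ∂P) * (∫ ω, g ω ∂P)|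
          ≤ |∫ ω, f ω * g ω ∂P - ∫ ω, f' ω * g' ω ∂P|
            + |∫ ω, f' ω * g' ω ∂P - (∫ ω, f' ω ∂P) * (∫ ω, g' ω ∂P)|
            + |(∫ ω, f' ω ∂P) * (∫ ω, g' ω ∂P) - (∫ ω, f ω ∂P) * (∫ ω, g ω ∂P)| := by
        have := abs_sub_le (∫ ω, f ω * g ω ∂P) (∫ ω, f' ω * g' ω ∂P)
          ((∫ ω, f ω ∂P) * (∫ ω, g ω ∂P))
        have h2 := abs_sub_le (∫ ω, f' ω * g' ω ∂P)
          ((∫ ω, f' ω ∂P) * (∫ ω, g' ω ∂P)) ((∫ ω, f ω ∂P) * (∫ ω, g ω ∂P))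
        linarith
      linarith
    have hlast : 4*Mr*(2*Mr/m) ≤ ε := by
      have h8 : 8*Mr^2 ≤ ε * m := by
        rw [div_le_iff₀ hε] at hmR
        linarith
      have heq : 4*Mr*(2*Mr/m) = 8*Mr^2/m := by
        field_simp
        ring
      rw [heq, div_le_iff₀ hmR']
      linarith
    linarith


end CovBound

/-- Rio's covariance/variance bound: for a centered stationary β-mixing
sequence with |X_t| ≤ M a.s., (1/n) E(Σ_{j=1}^n X_j)² ≤ 4M² ∫_0^1 β^{-1}(u)du,
where β^{-1}(u) = Σ_{k∈ℕ} 1_{β(k) > u} with the convention β(0)=1. -/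
theorem stmt2 (Ω : Type) [MeasurableSpace Ω] (P : Measure Ω) [IsProbabilityMeasure P]
    (X : ℤ → Ω → ℝ) (hXmeas : ∀ t, Measurable (X t)) (M : ℝ)
    (hstat : StationaryZ P X)
    (hcentered : ∀ t : ℤ, ∫ ω, X t ω ∂P = 0)
    (hbdd : ∀ t : ℤ, ∀ᵐ ω ∂P, |X t ω| ≤ M)
    (beta : ℕ → ℝ)
    (hbeta : ∀ k : ℕ, beta k = if k = 0 then 1 else betaMixZ P X k)
    (n : ℕ) (hn : 0 < n) :
    ENNReal.ofReal ((1 / (n : ℝ)) * ∫ ω, (∑ j ∈ Finset.Icc 1 n, X (j : ℤ) ω) ^ 2 ∂P) ≤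
      ENNReal.ofReal (4 * M ^ 2) *
        ∫⁻ u in Set.Ioc (0 : ℝ) 1, ∑' k : ℕ, (if u < beta k then (1 : ℝ≥0∞) else 0) := by
  classical
  have hM0 : 0 ≤ M := by
    obtain ⟨ω, hω⟩ := (hbdd 0).exists
    exact le_trans (abs_nonneg _) hω
  set past : ℤ → MeasurableSpace Ω := fun t =>
    ⨆ s : {s : ℤ // s ≤ t}, MeasurableSpace.comap (X s) inferInstance with hpast
  set fut : ℤ → ℕ → MeasurableSpace Ω := fun t q =>
    ⨆ s : {s : ℤ // t + q ≤ s}, MeasurableSpace.comap (X s) inferInstance with hfut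
  have hpast_le : ∀ t, past t ≤ (inferInstance : MeasurableSpace Ω) := fun t =>
    iSup_le fun s => (hXmeas s).comap_le
  have hfut_le : ∀ t (q : ℕ), fut t q ≤ (inferInstance : MeasurableSpace Ω) := fun t q =>
    iSup_le fun s => (hXmeas s).comap_le
  have hbdd_range : ∀ q : ℕ,
      BddAbove (Set.range fun t : ℤ => betaDep P (past t) (fut t q)) := by
    intro q
    refine ⟨1, ?_⟩
    rintro x ⟨t, rfl⟩
    exact betaDep_le_one P (hpast_le t) (hfut_le t q)
  have hmix_eq : ∀ q : ℕ, betaMixZ P X q = ⨆ t : ℤ, betaDep P (past t) (fut t q) :=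
    fun q => rfl
  have hmix_nonneg : ∀ q : ℕ, 0 ≤ betaMixZ P X q := by
    intro q
    rw [hmix_eq q]
    exact Real.iSup_nonneg fun t => betaDep_nonneg P (hpast_le t) (hfut_le t q)
  have hbeta_nonneg : ∀ k, 0 ≤ beta k := by
    intro k
    rw [hbeta k]
    split
    · exact zero_le_one
    · exact hmix_nonneg k
  set mf : ℕ → ℝ := fun d => min (beta d) 1 with hmf
  have hmf_nonneg : ∀ d, 0 ≤ mf d := fun d => le_min (hbeta_nonneg d) zero_le_one
  have hprod_bd : ∀ s t : ℤ, ∀ᵐ ω ∂P, |X s ω * X t ω| ≤ M^2 := by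
    intro s t
    filter_upwards [hbdd s, hbdd t] with ω h1 h2
    rw [abs_mul]
    calc |X s ω| * |X t ω| ≤ M * M := mul_le_mul h1 h2 (abs_nonneg _) hM0
      _ = M^2 := (sq M).symm
  have hprodint : ∀ s t : ℤ, Integrable (fun ω => X s ω * X t ω) P := fun s t =>
    integrable_of_ae_abs_le P ((hXmeas s).mul (hXmeas t)).aestronglyMeasurable (hprod_bd s t)
  have key : ∀ j k : ℕ, j ≤ k →
      |∫ ω, X (j:ℤ) ω * X (k:ℤ) ω ∂P| ≤ 2 * M^2 * mf (k - j) := by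
    intro j k hjk
    have hM2 : |∫ ω, X (j:ℤ) ω * X (k:ℤ) ω ∂P| ≤ M^2 :=
      abs_integral_le_of_ae P (hprod_bd j k)
    rcases Nat.eq_or_lt_of_le hjk with heq | hlt
    · have hd0 : k - j = 0 := by omega
      have hmf0 : mf 0 = 1 := by
        rw [hmf]
        simp only [hbeta 0, if_pos rfl]
        exact min_self 1
      rw [hd0, hmf0]
      nlinarith [sq_nonneg M]
    · set d : ℕ := k - j with hd
      have hd1 : d ≠ 0 := by omega
      have hfA : @Measurable Ω ℝ (past (j:ℤ)) _ (X (j:ℤ)) :=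
        Measurable.of_comap_le (le_iSup
          (fun s : {s : ℤ // s ≤ (j:ℤ)} => MeasurableSpace.comap (X s) inferInstance)
          ⟨(j:ℤ), le_refl _⟩)
      have hkmem : (j:ℤ) + (d:ℕ) ≤ (k:ℤ) := by
        push_cast
        omega
      have hgB : @Measurable Ω ℝ (fut (j:ℤ) d) _ (X (k:ℤ)) :=
        Measurable.of_comap_le (le_iSup
          (fun s : {s : ℤ // (j:ℤ) + (d:ℕ) ≤ s} => MeasurableSpace.comap (X s) inferInstance)
          ⟨(k:ℤ), hkmem⟩)
      have hcov := cov_bound (past (j:ℤ)) (fut (j:ℤ) d) P (hpast_le (j:ℤ))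
        (hfut_le (j:ℤ) d) (X (j:ℤ)) (X (k:ℤ)) hfA hgB hM0 (hbdd (j:ℤ)) (hbdd (k:ℤ))
      rw [hcentered (j:ℤ), zero_mul, sub_zero] at hcov
      have hle_mix : betaDep P (past (j:ℤ)) (fut (j:ℤ) d) ≤ betaMixZ P X d := by
        rw [hmix_eq d]
        exact le_ciSup (hbdd_range d) (j:ℤ)
      have hbd : beta d = betaMixZ P X d := by rw [hbeta d, if_neg hd1]
      rcases le_total (beta d) 1 with h | h
      · have hmfd : mf d = beta d := min_eq_left h
        rw [hmfd, hbd]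
        nlinarith [sq_nonneg M, hcov, hle_mix]
      · have hmfd : mf d = 1 := min_eq_right h
        rw [hmfd]
        nlinarith [sq_nonneg M]
  have key2 : ∀ j k : ℕ,
      |∫ ω, X (j:ℤ) ω * X (k:ℤ) ω ∂P| ≤ 2 * M^2 * mf (Nat.dist j k) := by
    intro j k
    rcases le_total j k with h | h
    · rw [Nat.dist_eq_sub_of_le h]
      exact key j k h
    · rw [Nat.dist_comm, Nat.dist_eq_sub_of_le h]
      have heq : (fun ω => X (j:ℤ) ω * X (k:ℤ) ω) = fun ω => X (k:ℤ) ω * X (j:ℤ) ω := by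
        funext ω; ring
      rw [heq]
      exact key k j h
  have hexpand : ∫ ω, (∑ j ∈ Finset.Icc 1 n, X (j:ℤ) ω)^2 ∂P
      = ∑ j ∈ Finset.Icc 1 n, ∑ k ∈ Finset.Icc 1 n, ∫ ω, X (j:ℤ) ω * X (k:ℤ) ω ∂P := by
    have h1 : ∀ ω, (∑ j ∈ Finset.Icc 1 n, X (j:ℤ) ω)^2
        = ∑ j ∈ Finset.Icc 1 n, ∑ k ∈ Finset.Icc 1 n, X (j:ℤ) ω * X (k:ℤ) ω := by
      intro ω
      rw [sq, Finset.sum_mul_sum]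
    simp_rw [h1]
    rw [integral_finset_sum _ fun j _ => integrable_finset_sum _ fun k _ => hprodint _ _]
    exact Finset.sum_congr rfl fun j _ => integral_finset_sum _ fun k _ => hprodint _ _
  have hinner : ∀ j ∈ Finset.Icc 1 n, ∑ k ∈ Finset.Icc 1 n, mf (Nat.dist j k)
      ≤ 2 * ∑ d ∈ Finset.range n, mf d := by
    intro j hj
    rw [Finset.mem_Icc] at hj
    have hsplit : Finset.Icc 1 n = Finset.Icc 1 j ∪ Finset.Icc (j+1) n := by
      ext x
      simp only [Finset.mem_Icc, Finset.mem_union]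
      omega
    have hdisj : Disjoint (Finset.Icc 1 j) (Finset.Icc (j+1) n) := by
      rw [Finset.disjoint_left]
      intro x h1 h2
      rw [Finset.mem_Icc] at h1 h2
      omega
    rw [hsplit, Finset.sum_union hdisj]
    have hT1 : ∑ k ∈ Finset.Icc 1 j, mf (Nat.dist j k) ≤ ∑ d ∈ Finset.range n, mf d := by
      have hre : ∑ k ∈ Finset.Icc 1 j, mf (Nat.dist j k)
          = ∑ d ∈ (Finset.Icc 1 j).image (fun k => j - k), mf d := by
        rw [Finset.sum_image]
        · exact Finset.sum_congr rfl fun k hk => by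
            rw [Finset.mem_Icc] at hk
            rw [Nat.dist_comm, Nat.dist_eq_sub_of_le hk.2]
        · intro x hx y hy hxy
          rw [Finset.coe_Icc, Set.mem_Icc] at hx hy
          dsimp only at hxy
          omega
      rw [hre]
      refine Finset.sum_le_sum_of_subset_of_nonneg ?_ fun d _ _ => hmf_nonneg d
      intro d hd
      simp only [Finset.mem_image, Finset.mem_Icc] at hd
      obtain ⟨k, hk, rfl⟩ := hd
      simp only [Finset.mem_range]
      omega
    have hT2 : ∑ k ∈ Finset.Icc (j+1) n, mf (Nat.dist j k) ≤ ∑ d ∈ Finset.range n, mf d := by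
      have hre : ∑ k ∈ Finset.Icc (j+1) n, mf (Nat.dist j k)
          = ∑ d ∈ (Finset.Icc (j+1) n).image (fun k => k - j), mf d := by
        rw [Finset.sum_image]
        · exact Finset.sum_congr rfl fun k hk => by
            rw [Finset.mem_Icc] at hk
            rw [Nat.dist_eq_sub_of_le (by omega)]
        · intro x hx y hy hxy
          rw [Finset.coe_Icc, Set.mem_Icc] at hx hy
          dsimp only at hxy
          omega
      rw [hre]
      refine Finset.sum_le_sum_of_subset_of_nonneg ?_ fun d _ _ => hmf_nonneg d
      intro d hd
      simp only [Finset.mem_image, Finset.mem_Icc] at hd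
      obtain ⟨k, hk, rfl⟩ := hd
      simp only [Finset.mem_range]
      omega
    linarith
  have hsum_bound : ∑ j ∈ Finset.Icc 1 n, ∑ k ∈ Finset.Icc 1 n,
      ∫ ω, X (j:ℤ) ω * X (k:ℤ) ω ∂P ≤ 4 * M^2 * n * ∑ d ∈ Finset.range n, mf d := by
    calc ∑ j ∈ Finset.Icc 1 n, ∑ k ∈ Finset.Icc 1 n, ∫ ω, X (j:ℤ) ω * X (k:ℤ) ω ∂P
        ≤ ∑ j ∈ Finset.Icc 1 n, ∑ k ∈ Finset.Icc 1 n, |∫ ω, X (j:ℤ) ω * X (k:ℤ) ω ∂P| :=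
          Finset.sum_le_sum fun j _ => Finset.sum_le_sum fun k _ => le_abs_self _
      _ ≤ ∑ j ∈ Finset.Icc 1 n, ∑ k ∈ Finset.Icc 1 n, 2 * M^2 * mf (Nat.dist j k) :=
          Finset.sum_le_sum fun j _ => Finset.sum_le_sum fun k _ => key2 j k
      _ = ∑ j ∈ Finset.Icc 1 n, 2 * M^2 * ∑ k ∈ Finset.Icc 1 n, mf (Nat.dist j k) := by
          simp_rw [Finset.mul_sum]
      _ ≤ ∑ j ∈ Finset.Icc 1 n, 2 * M^2 * (2 * ∑ d ∈ Finset.range n, mf d) :=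
          Finset.sum_le_sum fun j hj =>
            mul_le_mul_of_nonneg_left (hinner j hj) (by positivity)
      _ = 4 * M^2 * n * ∑ d ∈ Finset.range n, mf d := by
          rw [Finset.sum_const, Nat.card_Icc]
          simp only [Nat.add_sub_cancel, nsmul_eq_mul]
          ring
  have hnpos : (0:ℝ) < n := by exact_mod_cast hn
  have hLHS : (1/(n:ℝ)) * ∫ ω, (∑ j ∈ Finset.Icc 1 n, X (j:ℤ) ω)^2 ∂P
      ≤ 4 * M^2 * ∑ d ∈ Finset.range n, mf d := by
    rw [hexpand]
    calc (1/(n:ℝ)) * ∑ j ∈ Finset.Icc 1 n, ∑ k ∈ Finset.Icc 1 n,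
          ∫ ω, X (j:ℤ) ω * X (k:ℤ) ω ∂P
        ≤ (1/(n:ℝ)) * (4 * M^2 * n * ∑ d ∈ Finset.range n, mf d) :=
          mul_le_mul_of_nonneg_left hsum_bound (by positivity)
      _ = 4 * M^2 * ∑ d ∈ Finset.range n, mf d := by
          field_simp
  have hmeas_ite : ∀ k : ℕ,
      Measurable fun u : ℝ => (if u < beta k then (1:ℝ≥0∞) else 0) := fun k =>
    Measurable.ite measurableSet_Iio measurable_const measurable_const
  have hstep3 : ∀ k : ℕ,
      (∫⁻ u in Set.Ioc (0:ℝ) 1, (if u < beta k then (1:ℝ≥0∞) else 0))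
        = ENNReal.ofReal (mf k) := by
    intro k
    have hind : (fun u : ℝ => (if u < beta k then (1:ℝ≥0∞) else 0))
        = (Set.Iio (beta k)).indicator (fun _ => 1) := by
      funext u
      simp [Set.indicator, Set.mem_Iio]
    rw [hind, lintegral_indicator measurableSet_Iio, setLIntegral_one,
        Measure.restrict_apply measurableSet_Iio]
    rcases lt_or_ge 1 (beta k) with h | h
    · have hset : Set.Iio (beta k) ∩ Set.Ioc (0:ℝ) 1 = Set.Ioc 0 1 := by
        ext x
        simp only [Set.mem_inter_iff, Set.mem_Iio, Set.mem_Ioc]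
        constructor
        · rintro ⟨h1, h2⟩; exact h2
        · intro hx; exact ⟨lt_of_le_of_lt hx.2 h, hx⟩
      rw [hset, Real.volume_Ioc]
      have : mf k = 1 := min_eq_right h.le
      rw [this]
      norm_num
    · have hset : Set.Iio (beta k) ∩ Set.Ioc (0:ℝ) 1 = Set.Ioo 0 (beta k) := by
        ext x
        simp only [Set.mem_inter_iff, Set.mem_Iio, Set.mem_Ioc, Set.mem_Ioo]
        constructor
        · rintro ⟨h1, h2, h3⟩; exact ⟨h2, h1⟩
        · rintro ⟨h1, h2⟩; exact ⟨h2, h1, le_trans h2.le h⟩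
      rw [hset, Real.volume_Ioo]
      have : mf k = beta k := min_eq_left h
      rw [this]
      norm_num
  have hRHSge : ENNReal.ofReal (4 * M^2 * ∑ d ∈ Finset.range n, mf d)
      ≤ ENNReal.ofReal (4 * M ^ 2) *
        ∫⁻ u in Set.Ioc (0:ℝ) 1, ∑' k : ℕ, (if u < beta k then (1:ℝ≥0∞) else 0) := by
    have h1 : (∫⁻ u in Set.Ioc (0:ℝ) 1,
          ∑ k ∈ Finset.range n, (if u < beta k then (1:ℝ≥0∞) else 0))
        ≤ ∫⁻ u in Set.Ioc (0:ℝ) 1, ∑' k : ℕ, (if u < beta k then (1:ℝ≥0∞) else 0) :=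
      lintegral_mono fun u => ENNReal.sum_le_tsum (Finset.range n)
    have h2 : (∫⁻ u in Set.Ioc (0:ℝ) 1,
          ∑ k ∈ Finset.range n, (if u < beta k then (1:ℝ≥0∞) else 0))
        = ∑ k ∈ Finset.range n, ENNReal.ofReal (mf k) := by
      rw [lintegral_finset_sum _ fun k _ => hmeas_ite k]
      exact Finset.sum_congr rfl fun k _ => hstep3 k
    have h3 : ∑ k ∈ Finset.range n, ENNReal.ofReal (mf k)
        = ENNReal.ofReal (∑ k ∈ Finset.range n, mf k) :=
      (ENNReal.ofReal_sum_of_nonneg fun k _ => hmf_nonneg k).symm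
    calc ENNReal.ofReal (4 * M^2 * ∑ d ∈ Finset.range n, mf d)
        = ENNReal.ofReal (4 * M^2) * ENNReal.ofReal (∑ d ∈ Finset.range n, mf d) :=
          ENNReal.ofReal_mul (by positivity)
      _ = ENNReal.ofReal (4 * M^2) * ∑ k ∈ Finset.range n, ENNReal.ofReal (mf k) := by
          rw [h3]
      _ = ENNReal.ofReal (4 * M^2) * ∫⁻ u in Set.Ioc (0:ℝ) 1,
            ∑ k ∈ Finset.range n, (if u < beta k then (1:ℝ≥0∞) else 0) := by
          rw [h2]
      _ ≤ _ := mul_le_mul_right h1 _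
  calc ENNReal.ofReal ((1 / (n : ℝ)) * ∫ ω, (∑ j ∈ Finset.Icc 1 n, X (j : ℤ) ω) ^ 2 ∂P)
      ≤ ENNReal.ofReal (4 * M^2 * ∑ d ∈ Finset.range n, mf d) :=
        ENNReal.ofReal_le_ofReal hLHS
    _ ≤ _ := hRHSge
end
end

section
/- Let q, m ∈ ℕ* and let Y_1, …, Y_m be i.i.d. random vectors with values in ℝ^q. For t ∈ ℝ and y = (z_1, …, z_q) ∈ ℝ^q set f_t(y) = (1/q) Σ_{i=1}^q 1_{z_i > t}, and define F(t) = E[f_t(Y_1)] and F_m(t) = (1/m) Σ_{j=1}^m f_t(Y_j). Then for every x > 0 with m x² ≥ 1, P( sup_{t ∈ ℝ} (F(t) − F_m(t))/√(F(t)) ≥ 2x ) ≤ 2 (2 q m) e^{−m x²}, with the convention that the supremand is 0 when F(t) = 0. -/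
open MeasureTheory ProbabilityTheory

open Filter

/-- quadratic upper bound for exp(-u), u ≥ 0 -/
lemma exp_neg_le_quad {u : ℝ} (hu : 0 ≤ u) : Real.exp (-u) ≤ 1 - u + u ^ 2 / 2 := by
  have hd : ∀ z : ℝ, HasDerivAt (fun z : ℝ => (1 - z + z ^ 2 / 2) * Real.exp z)
      ((-1 + z) * Real.exp z + (1 - z + z ^ 2 / 2) * Real.exp z) z := by
    intro z
    have hp : HasDerivAt (fun z : ℝ => 1 - z + z ^ 2 / 2) (-1 + z) z := by
      have := ((hasDerivAt_id z).const_sub 1).add (((hasDerivAt_pow 2 z)).div_const 2)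
      have h2 : HasDerivAt (fun z : ℝ => 1 - z + z ^ 2 / 2) (-1 + ↑2 * z ^ (2 - 1) / 2) z := this
      convert h2 using 1
      norm_num
    exact hp.mul (Real.hasDerivAt_exp z)
  have key : ∀ z ∈ Set.Ici (0:ℝ), 1 ≤ (1 - z + z ^ 2 / 2) * Real.exp z := by
    have hmono : MonotoneOn (fun z : ℝ => (1 - z + z ^ 2 / 2) * Real.exp z) (Set.Ici 0) := by
      apply monotoneOn_of_deriv_nonneg (convex_Ici 0)
      · exact (Continuous.mul (by continuity) Real.continuous_exp).continuousOn
      · intro z _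
        exact (hd z).differentiableAt.differentiableWithinAt
      · intro z hz
        rw [(hd z).deriv]
        have hz' : (0:ℝ) < z := by simpa using hz
        nlinarith [Real.exp_pos z, sq_nonneg z]
    intro z hz
    have := hmono (Set.self_mem_Ici) hz (by simpa using hz)
    simpa using this
  have h := key u hu
  have hpos := Real.exp_pos u
  rw [Real.exp_neg, inv_le_iff_one_le_mul₀ hpos]
  linarith [h]

/-- integrability of bounded measurable functions -/
lemma int_of_bdd {Ω : Type} [MeasurableSpace Ω] {P : Measure Ω} [IsFiniteMeasure P]
    {h : Ω → ℝ} (hmeas : Measurable h) {c : ℝ} (hb : ∀ ω, |h ω| ≤ c) :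
    Integrable h P := by
  refine Integrable.mono' (integrable_const c) hmeas.aestronglyMeasurable ?_
  exact Filter.Eventually.of_forall (by simpa using hb)

/-- single-variable mgf bound: W ∈ [0,1], mean μ, lam ≥ 0:
    E exp(-lam W) ≤ exp(lam²μ/2 - lam μ) -/
lemma mgf_single {Ω : Type} [MeasurableSpace Ω] (P : Measure Ω) [IsProbabilityMeasure P]
    {W : Ω → ℝ} (hmeas : Measurable W) (h01 : ∀ ω, W ω ∈ Set.Icc (0:ℝ) 1)
    {lam : ℝ} (hlam : 0 ≤ lam) :
    ∫ ω, Real.exp (-(lam * W ω)) ∂P ≤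
      Real.exp (lam ^ 2 * (∫ ω, W ω ∂P) / 2 - lam * (∫ ω, W ω ∂P)) := by
  set μ := ∫ ω, W ω ∂P with hμ
  have hWint : Integrable W P := int_of_bdd hmeas (c := 1) (fun ω => by
    rcases h01 ω with ⟨h0, h1⟩; rw [abs_le]; constructor <;> linarith)
  have hptw : ∀ ω, Real.exp (-(lam * W ω)) ≤ 1 + (lam ^ 2 / 2 - lam) * W ω := by
    intro ω
    rcases h01 ω with ⟨h0, h1⟩
    have h := exp_neg_le_quad (mul_nonneg hlam h0)
    have hsq : (lam * W ω) ^ 2 ≤ lam ^ 2 * W ω := by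
      have : (lam * W ω) ^ 2 = lam ^ 2 * (W ω * W ω) := by ring
      rw [this]
      have : W ω * W ω ≤ W ω := by nlinarith
      nlinarith [sq_nonneg lam]
    calc Real.exp (-(lam * W ω)) ≤ 1 - lam * W ω + (lam * W ω) ^ 2 / 2 := h
      _ ≤ 1 + (lam ^ 2 / 2 - lam) * W ω := by nlinarith
  have hLint : Integrable (fun ω => Real.exp (-(lam * W ω))) P := by
    refine int_of_bdd ((hmeas.const_mul lam).neg.exp) (c := 1) (fun ω => ?_)
    rw [abs_of_pos (Real.exp_pos _)]
    refine Real.exp_le_one_iff.mpr ?_  -- maybe wrong name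
    exact neg_nonpos.mpr (mul_nonneg hlam (h01 ω).1)
  have hRint : Integrable (fun ω => 1 + (lam ^ 2 / 2 - lam) * W ω) P :=
    (integrable_const 1).add (hWint.const_mul _)
  have h1 : ∫ ω, Real.exp (-(lam * W ω)) ∂P ≤ ∫ ω, (1 + (lam ^ 2 / 2 - lam) * W ω) ∂P :=
    integral_mono hLint hRint hptw
  have h2 : ∫ ω, (1 + (lam ^ 2 / 2 - lam) * W ω) ∂P = 1 + (lam ^ 2 / 2 - lam) * μ := by
    rw [integral_add (integrable_const 1) (hWint.const_mul _), integral_const,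
      integral_const_mul]
    simp [hμ]
  have h3 : 1 + (lam ^ 2 / 2 - lam) * μ ≤ Real.exp ((lam ^ 2 / 2 - lam) * μ) := by
    linarith [Real.add_one_le_exp ((lam ^ 2 / 2 - lam) * μ)]
  calc ∫ ω, Real.exp (-(lam * W ω)) ∂P ≤ 1 + (lam ^ 2 / 2 - lam) * μ := h1.trans_eq h2
    _ ≤ Real.exp ((lam ^ 2 / 2 - lam) * μ) := h3
    _ = Real.exp (lam ^ 2 * μ / 2 - lam * μ) := by ring_nf

/-- Bernstein-type lower-tail bound for averages of independent [0,1] variables. -/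
lemma bern {m : ℕ} (hm : 0 < m) {Ω : Type} [MeasurableSpace Ω] (P : Measure Ω)
    [IsProbabilityMeasure P] (W : Fin m → Ω → ℝ)
    (hmeas : ∀ j, Measurable (W j))
    (hindep : iIndepFun W P)
    (h01 : ∀ j ω, W j ω ∈ Set.Icc (0:ℝ) 1)
    (μ : ℝ) (hμ : ∀ j, ∫ ω, W j ω ∂P = μ)
    (b s : ℝ) (hb : 0 < b) (hμb : μ ≤ b) (hs : 0 ≤ s) :
    (P {ω | s ≤ μ - (1 / m) * ∑ j, W j ω}).toReal ≤
      Real.exp (-(m * s ^ 2) / (2 * b)) := by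
  set lam := s / b with hlam
  have hlam0 : 0 ≤ lam := div_nonneg hs hb.le
  set X : Ω → ℝ := fun ω => - ∑ j, W j ω with hX
  have hXval : ∀ ω, X ω = - ∑ j, W j ω := fun ω => rfl
  have hXeq : X = ∑ j, (fun ω => - W j ω) := by
    funext ω
    rw [Finset.sum_apply, hX]
    simp
  have hev : {ω | s ≤ μ - (1 / m) * ∑ j, W j ω} ⊆ {ω | m * s - m * μ ≤ X ω} := by
    intro ω hω
    simp only [Set.mem_setOf_eq] at hω ⊢
    rw [hXval]
    have hm' : (0:ℝ) < m := by exact_mod_cast hm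
    have := mul_le_mul_of_nonneg_left hω hm'.le
    rw [mul_sub] at this
    rw [show (m:ℝ) * ((1 / m) * ∑ j, W j ω) = ∑ j, W j ω by field_simp] at this
    linarith
  have hXint : Integrable (fun ω => Real.exp (lam * X ω)) P := by
    refine int_of_bdd ?_ (c := 1) (fun ω => ?_)
    · exact (measurable_const.mul ((Finset.measurable_sum Finset.univ
        (fun j _ => hmeas j)).neg)).exp
    · rw [abs_of_pos (Real.exp_pos _), Real.exp_le_one_iff]
      rw [hXval]
      have : (0:ℝ) ≤ ∑ j, W j ω := Finset.sum_nonneg (fun j _ => (h01 j ω).1)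
      nlinarith
  have hmgf := measure_ge_le_exp_mul_mgf (X := X) (μ := P) (m * s - m * μ) hlam0 hXint
  refine le_trans ((ENNReal.toReal_mono (measure_ne_top _ _) (measure_mono hev)).trans hmgf) ?_
  have hmgf_prod : mgf X P lam = ∏ j, mgf (fun ω => - W j ω) P lam := by
    rw [hXeq]
    exact iIndepFun.mgf_sum (hindep.comp _ (fun j => measurable_neg)) (fun j => (hmeas j).neg) _
  have hone : ∀ j, mgf (fun ω => - W j ω) P lam ≤ Real.exp (lam ^ 2 * μ / 2 - lam * μ) := by
    intro j
    have := mgf_single P (hmeas j) (h01 j) hlam0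
    rw [hμ j] at this
    simpa [mgf, neg_mul, mul_neg, mul_comm] using this
  have hprod : mgf X P lam ≤ (Real.exp (lam ^ 2 * μ / 2 - lam * μ)) ^ (m : ℕ) := by
    rw [hmgf_prod]
    calc ∏ j, mgf (fun ω => - W j ω) P lam
        ≤ ∏ _j : Fin m, Real.exp (lam ^ 2 * μ / 2 - lam * μ) :=
          Finset.prod_le_prod (fun j _ => mgf_nonneg) (fun j _ => hone j)
      _ = (Real.exp (lam ^ 2 * μ / 2 - lam * μ)) ^ (m : ℕ) := by
          rw [Finset.prod_const, Finset.card_univ, Fintype.card_fin]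
  calc Real.exp (-lam * (m * s - m * μ)) * mgf X P lam
      ≤ Real.exp (-lam * (m * s - m * μ)) * (Real.exp (lam ^ 2 * μ / 2 - lam * μ)) ^ (m:ℕ) := by
        exact mul_le_mul_of_nonneg_left hprod (Real.exp_pos _).le
    _ = Real.exp (-lam * (m * s - m * μ) + m * (lam ^ 2 * μ / 2 - lam * μ)) := by
        rw [← Real.exp_nat_mul, ← Real.exp_add]
    _ ≤ Real.exp (-(m * s ^ 2) / (2 * b)) := by
        apply Real.exp_le_exp.mpr
        have hμ0 : 0 ≤ μ := by rw [← hμ ⟨0, hm⟩]; exact integral_nonneg (fun ω => (h01 _ ω).1)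
        have hm0 : (0:ℝ) ≤ m := by positivity
        have heq : -lam * (m * s - m * μ) + m * (lam ^ 2 * μ / 2 - lam * μ)
            = m * (- lam * s + lam ^ 2 * μ / 2) := by ring
        rw [heq, hlam]
        rw [div_pow, show -(↑m * s ^ 2) / (2 * b) = ↑m * (-(s ^ 2) / (2*b)) by ring]
        apply mul_le_mul_of_nonneg_left _ hm0
        have h2 : s ^ 2 / b ^ 2 * μ ≤ s ^ 2 / b := by
          rw [div_mul_eq_mul_div, div_le_div_iff₀ (by positivity) hb]
          nlinarith [mul_le_mul_of_nonneg_right (mul_le_mul_of_nonneg_left hμb (sq_nonneg s)) hb.le]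
        have h3 : -(s / b) * s = -(s ^ 2 / b) := by ring
        have h4 : -s ^ 2 / (2 * b) = -(s ^ 2 / b) / 2 := by ring
        rw [h3, h4]
        linarith

set_option maxHeartbeats 2000000 in
/-- a normalized DKW-type deviation bound for i.i.d. ℝ^q-valued vectors.
For t ∈ ℝ and y ∈ ℝ^q, f_t(y) = (1/q) Σ_i 1_{y_i > t}; F(t) = E f_t(Y_1),
F_m(t) = (1/m) Σ_j f_t(Y_j). If m x² ≥ 1 then
P( sup_t (F(t) − F_m(t))/√(F(t)) ≥ 2x ) ≤ 2(2qm) e^{−m x²},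
with the supremand taken to be 0 when F(t) = 0. -/
theorem stmt11 (q m : ℕ) (hq : 0 < q) (hm : 0 < m)
    (Ω : Type) [MeasurableSpace Ω] (P : Measure Ω) [IsProbabilityMeasure P]
    (Y : Fin m → Ω → (Fin q → ℝ))
    (hYmeas : ∀ j, Measurable (Y j))
    (hindep : iIndepFun Y P)
    (hident : ∀ j : Fin m, Measure.map (Y j) P = Measure.map (Y ⟨0, hm⟩) P)
    -- f_t, F and F_m
    (f : ℝ → (Fin q → ℝ) → ℝ)
    (hf : ∀ t y, f t y = (1 / (q : ℝ)) * ∑ i : Fin q, (if t < y i then (1 : ℝ) else 0))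
    (F : ℝ → ℝ) (hF : ∀ t, F t = ∫ ω, f t (Y ⟨0, hm⟩ ω) ∂P)
    (Fm : ℝ → Ω → ℝ) (hFm : ∀ t ω, Fm t ω = (1 / (m : ℝ)) * ∑ j : Fin m, f t (Y j ω))
    (x : ℝ) (hx : 0 < x) (hmx : 1 ≤ (m : ℝ) * x ^ 2) :
    (P {ω | 2 * x ≤ ⨆ t : ℝ,
        (if F t = 0 then 0 else (F t - Fm t ω) / Real.sqrt (F t))}).toReal ≤
      2 * (2 * q * m) * Real.exp (-(m : ℝ) * x ^ 2) := by
  classical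
  have hq' : (0:ℝ) < q := by exact_mod_cast hq
  have hm' : (0:ℝ) < m := by exact_mod_cast hm
  set Y0 := Y ⟨0, hm⟩ with hY0
  -- the closed-threshold analogue of f
  set g : ℝ → (Fin q → ℝ) → ℝ :=
    fun t y => (1 / (q : ℝ)) * ∑ i : Fin q, (if t ≤ y i then (1 : ℝ) else 0) with hgdef
  set G : ℝ → ℝ := fun t => ∫ ω, g t (Y0 ω) ∂P with hGdef
  set Gm : ℝ → Ω → ℝ := fun t ω => (1 / (m : ℝ)) * ∑ j : Fin m, g t (Y j ω) with hGmdef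
  -- basic pointwise facts
  have havg01 : ∀ (c : Fin q → Prop) (_ : DecidablePred c),
      0 ≤ (1 / (q:ℝ)) * ∑ i : Fin q, (if c i then (1:ℝ) else 0) ∧
      (1 / (q:ℝ)) * ∑ i : Fin q, (if c i then (1:ℝ) else 0) ≤ 1 := by
    intro c hc
    constructor
    · apply mul_nonneg (by positivity)
      exact Finset.sum_nonneg (fun i _ => by split <;> norm_num)
    · have hsum : ∑ i : Fin q, (if c i then (1:ℝ) else 0) ≤ q := by
        calc ∑ i : Fin q, (if c i then (1:ℝ) else 0)
            ≤ ∑ _i : Fin q, (1:ℝ) := Finset.sum_le_sum (fun i _ => by split <;> norm_num)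
          _ = q := by simp
      calc (1 / (q:ℝ)) * ∑ i : Fin q, (if c i then (1:ℝ) else 0)
          ≤ (1 / (q:ℝ)) * q := by
            exact mul_le_mul_of_nonneg_left hsum (by positivity)
        _ = 1 := by field_simp
  have havgmono : ∀ (c c' : Fin q → Prop) (_ : DecidablePred c) (_ : DecidablePred c'),
      (∀ i, c i → c' i) →
      (1 / (q:ℝ)) * ∑ i : Fin q, (if c i then (1:ℝ) else 0) ≤
      (1 / (q:ℝ)) * ∑ i : Fin q, (if c' i then (1:ℝ) else 0) := by
    intro c c' hc hc' h
    apply mul_le_mul_of_nonneg_left _ (by positivity : (0:ℝ) ≤ 1 / q)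
    apply Finset.sum_le_sum
    intro i _
    by_cases hci : c i
    · rw [if_pos hci, if_pos (h i hci)]
    · rw [if_neg hci]; split <;> norm_num
  have hf01 : ∀ t y, 0 ≤ f t y ∧ f t y ≤ 1 := by
    intro t y; rw [hf]; exact havg01 (fun i => t < y i) _
  have hg01 : ∀ t y, 0 ≤ g t y ∧ g t y ≤ 1 := by
    intro t y; rw [hgdef]; exact havg01 (fun i => t ≤ y i) _
  have hfg : ∀ {s u : ℝ}, s < u → ∀ y, g u y ≤ f s y := by
    intro s u hsu y
    rw [hf, hgdef]
    exact havgmono _ _ _ _ (fun i hi => lt_of_lt_of_le hsu hi)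
  have hfmono : ∀ {s t : ℝ}, s ≤ t → ∀ y, f t y ≤ f s y := by
    intro s t hst y
    rw [hf, hf]
    exact havgmono _ _ _ _ (fun i hi => lt_of_le_of_lt hst hi)
  have hfmeas : ∀ t, Measurable (f t) := by
    intro t
    have : f t = fun y => (1 / (q : ℝ)) * ∑ i : Fin q, (if t < y i then (1 : ℝ) else 0) :=
      funext (hf t)
    rw [this]
    apply Measurable.const_mul
    apply Finset.measurable_sum
    intro i _
    exact Measurable.ite (measurableSet_lt measurable_const (measurable_pi_apply i))
      measurable_const measurable_const
  have hgmeas : ∀ t, Measurable (g t) := by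
    intro t
    apply Measurable.const_mul
    apply Finset.measurable_sum
    intro i _
    exact Measurable.ite (measurableSet_le measurable_const (measurable_pi_apply i))
      measurable_const measurable_const
  have hfint : ∀ t (j : Fin m), Integrable (fun ω => f t (Y j ω)) P := by
    intro t j
    refine int_of_bdd ((hfmeas t).comp (hYmeas j)) (c := 1) (fun ω => ?_)
    rcases hf01 t (Y j ω) with ⟨h0, h1⟩
    rw [abs_le]; constructor <;> linarith
  have hgint : ∀ t (j : Fin m), Integrable (fun ω => g t (Y j ω)) P := by
    intro t j
    refine int_of_bdd ((hgmeas t).comp (hYmeas j)) (c := 1) (fun ω => ?_)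
    rcases hg01 t (Y j ω) with ⟨h0, h1⟩
    rw [abs_le]; constructor <;> linarith
  have hF01 : ∀ t, 0 ≤ F t ∧ F t ≤ 1 := by
    intro t
    rw [hF]
    constructor
    · exact integral_nonneg (fun ω => (hf01 t _).1)
    · calc ∫ ω, f t (Y0 ω) ∂P ≤ ∫ _ω, (1:ℝ) ∂P :=
            integral_mono (hfint t _) (integrable_const 1) (fun ω => (hf01 t _).2)
        _ = 1 := by simp
  have hFmono : ∀ {s t : ℝ}, s ≤ t → F t ≤ F s := by
    intro s t hst
    rw [hF, hF]
    exact integral_mono (hfint t _) (hfint s _) (fun ω => hfmono hst _)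
  have hFm0 : ∀ t ω, 0 ≤ Fm t ω := by
    intro t ω
    rw [hFm]
    exact mul_nonneg (by positivity) (Finset.sum_nonneg (fun j _ => (hf01 t _).1))
  have hFmGm : ∀ {s u : ℝ}, s < u → ∀ ω, Gm u ω ≤ Fm s ω := by
    intro s u hsu ω
    rw [hFm, hGmdef]
    exact mul_le_mul_of_nonneg_left
      (Finset.sum_le_sum (fun j _ => hfg hsu _)) (by positivity)
  have hGF : ∀ {s u : ℝ}, s < u → G u ≤ F s := by
    intro s u hsu
    rw [hGdef, hF]
    exact integral_mono (hgint u _) (hfint s _) (fun ω => hfg hsu _)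
  have hGmean : ∀ t (j : Fin m), ∫ ω, g t (Y j ω) ∂P = G t := by
    intro t j
    have h1 : ∫ y, g t y ∂(Measure.map (Y j) P) = ∫ ω, g t (Y j ω) ∂P :=
      integral_map (hYmeas j).aemeasurable (hgmeas t).aestronglyMeasurable
    have h2 : ∫ y, g t y ∂(Measure.map Y0 P) = ∫ ω, g t (Y0 ω) ∂P :=
      integral_map (hYmeas _).aemeasurable (hgmeas t).aestronglyMeasurable
    rw [← h1, hident j, h2]
  -- dominated convergence tool
  have hDCT : ∀ (T : ℕ → ℝ) (h : (Fin q → ℝ) → ℝ), Measurable h →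
      (∀ y, Tendsto (fun n => f (T n) y) atTop (nhds (h y))) →
      Tendsto (fun n : ℕ => F (T n)) atTop (nhds (∫ ω, h (Y0 ω) ∂P)) := by
    intro T h hhm hptw
    have heq : (fun n : ℕ => F (T n)) = fun n : ℕ => ∫ ω, f (T n) (Y0 ω) ∂P :=
      funext (fun n => hF (T n))
    rw [heq]
    apply tendsto_integral_of_dominated_convergence (fun _ => (1:ℝ))
      (fun n => ((hfmeas (T n)).comp (hYmeas _)).aestronglyMeasurable)
      (integrable_const 1)
    · intro n
      apply Eventually.of_forall
      intro ω
      rcases hf01 (T n) (Y0 ω) with ⟨h0, h1⟩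
      rw [Real.norm_eq_abs, abs_le]
      simp only [Function.comp_apply, ← hY0]
      constructor <;> linarith
    · exact Eventually.of_forall (fun ω => hptw (Y0 ω))
  have hseq0 : Tendsto (fun n : ℕ => 1 / ((n:ℝ) + 1)) atTop (nhds 0) :=
    tendsto_one_div_add_atTop_nhds_zero_nat
  -- limits
  have hFtop : Tendsto (fun n : ℕ => F n) atTop (nhds 0) := by
    have h0 : (0:ℝ) = ∫ ω, (fun _ : Fin q → ℝ => (0:ℝ)) (Y0 ω) ∂P := by simp
    rw [h0]
    apply hDCT _ _ measurable_const
    intro y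
    apply Tendsto.congr' _ tendsto_const_nhds
    rw [EventuallyEq, eventually_atTop]
    obtain ⟨i0⟩ : Nonempty (Fin q) := ⟨⟨0, hq⟩⟩
    obtain ⟨n0, hn0⟩ := exists_nat_ge (Finset.univ.sup' ⟨i0, Finset.mem_univ i0⟩ y)
    refine ⟨n0, fun n hn => ?_⟩
    rw [hf]
    rw [Finset.sum_eq_zero, mul_zero]
    intro i _
    rw [if_neg]
    push_neg
    calc y i ≤ Finset.univ.sup' ⟨i0, Finset.mem_univ i0⟩ y :=
          Finset.le_sup' y (Finset.mem_univ i)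
      _ ≤ n0 := hn0
      _ ≤ n := by exact_mod_cast hn
  have hright : ∀ u : ℝ, Tendsto (fun n : ℕ => F (u + 1 / (n + 1))) atTop (nhds (F u)) := by
    intro u
    have h0 : F u = ∫ ω, f u (Y0 ω) ∂P := hF u
    rw [h0]
    apply hDCT _ _ (hfmeas u)
    intro y
    apply Tendsto.congr' _ tendsto_const_nhds
    rw [EventuallyEq]
    have : ∀ i : Fin q, ∀ᶠ n : ℕ in atTop,
        (if u + 1 / ((n:ℝ) + 1) < y i then (1:ℝ) else 0) = (if u < y i then (1:ℝ) else 0) := by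
      intro i
      by_cases hi : u < y i
      · have := hseq0.eventually_lt_const (show (0:ℝ) < y i - u by linarith)
        filter_upwards [this] with n hn
        rw [if_pos hi, if_pos (by linarith)]
      · apply Eventually.of_forall
        intro n
        rw [if_neg hi, if_neg]
        push_neg at hi ⊢
        have : (0:ℝ) < 1 / ((n:ℝ) + 1) := by positivity
        linarith
    filter_upwards [eventually_all.mpr this] with n hn
    rw [hf, hf]
    congr 1
    exact Finset.sum_congr rfl (fun i _ => (hn i).symm)
  have hleft : ∀ u : ℝ, Tendsto (fun n : ℕ => F (u - 1 / (n + 1))) atTop (nhds (G u)) := by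
    intro u
    apply hDCT _ _ (hgmeas u)
    intro y
    apply Tendsto.congr' _ tendsto_const_nhds
    rw [EventuallyEq]
    have : ∀ i : Fin q, ∀ᶠ n : ℕ in atTop,
        (if u - 1 / ((n:ℝ) + 1) < y i then (1:ℝ) else 0) = (if u ≤ y i then (1:ℝ) else 0) := by
      intro i
      by_cases hi : u ≤ y i
      · apply Eventually.of_forall
        intro n
        have : (0:ℝ) < 1 / ((n:ℝ) + 1) := by positivity
        rw [if_pos hi, if_pos (by linarith)]
      · push_neg at hi
        have := hseq0.eventually_lt_const (show (0:ℝ) < u - y i by linarith)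
        filter_upwards [this] with n hn
        rw [if_neg (by linarith), if_neg (by linarith)]
    filter_upwards [eventually_all.mpr this] with n hn
    rw [hf]
    simp only [hgdef]
    congr 1
    exact Finset.sum_congr rfl (fun i _ => (hn i).symm)
  -- the ratio and generic bound
  have hRHS0 : 0 ≤ 2 * (2 * (q:ℝ) * m) * Real.exp (-(m : ℝ) * x ^ 2) := by positivity
  have hratio_sqrt : ∀ ω t,
      (if F t = 0 then 0 else (F t - Fm t ω) / Real.sqrt (F t)) ≤ Real.sqrt (F t) := by
    intro ω t
    by_cases h0 : F t = 0
    · rw [if_pos h0]; exact Real.sqrt_nonneg _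
    · rw [if_neg h0]
      have hFt : 0 < F t := lt_of_le_of_ne (hF01 t).1 (Ne.symm h0)
      rw [div_le_iff₀ (Real.sqrt_pos.mpr hFt), Real.mul_self_sqrt hFt.le]
      linarith [hFm0 t ω]
  have hratio1 : ∀ ω t, (if F t = 0 then 0 else (F t - Fm t ω) / Real.sqrt (F t)) ≤ 1 := by
    intro ω t
    refine (hratio_sqrt ω t).trans ?_
    rw [show (1:ℝ) = Real.sqrt 1 by rw [Real.sqrt_one]]
    exact Real.sqrt_le_sqrt (hF01 t).2
  by_cases hxhalf : 1 < 2 * x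
  · -- trivial case: the event is empty
    have hempty : {ω | 2 * x ≤ ⨆ t : ℝ,
        (if F t = 0 then 0 else (F t - Fm t ω) / Real.sqrt (F t))} = ∅ := by
      ext ω
      simp only [Set.mem_setOf_eq, Set.mem_empty_iff_false, iff_false, not_le]
      exact lt_of_le_of_lt (ciSup_le (hratio1 ω)) hxhalf
    rw [hempty]
    simpa using hRHS0
  push_neg at hxhalf
  have hxh : x ≤ 1 / 2 := by linarith
  -- grid construction
  set d : ℝ := x / 10 with hd
  have hd0 : 0 < d := by positivity
  set N : ℕ := ⌈(1 - x) / d⌉₊ with hN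
  set w : ℕ → ℝ := fun k => max (1 - k * d) x with hw
  set v : ℕ → ℝ := fun k => (w k) ^ 2 with hv
  have hwx : ∀ k, x ≤ w k := fun k => le_max_right _ _
  have hw1 : ∀ k, w k ≤ 1 := by
    intro k
    apply max_le _ (by linarith)
    have : (0:ℝ) ≤ (k:ℝ) * d := by positivity
    linarith
  have hwmono : ∀ k l, k ≤ l → w l ≤ w k := by
    intro k l hkl
    apply max_le _ (le_max_right _ _)
    refine le_trans ?_ (le_max_left _ _)
    have : (k:ℝ) * d ≤ (l:ℝ) * d := by
      apply mul_le_mul_of_nonneg_right _ hd0.le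
      exact_mod_cast hkl
    linarith
  have hwstep : ∀ k, w k ≤ w (k + 1) + d := by
    intro k
    apply max_le
    · refine le_trans ?_ (add_le_add_left (le_max_left (1 - ((k:ℕ)+1:ℕ) * d) x) d)
      push_cast
      ring_nf
      linarith
    · linarith [le_max_right (1 - (((k:ℕ)+1:ℕ):ℝ) * d) x, hd0.le]
  have hw0 : w 0 = 1 := by
    rw [hw]
    simp only [Nat.cast_zero, zero_mul, sub_zero]
    exact max_eq_left (by linarith)
  have hwN : w N = x := by
    rw [hw]
    apply max_eq_right
    have h1 : (1 - x) / d ≤ (N:ℝ) := Nat.le_ceil _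
    have h2 : 1 - x ≤ (N:ℝ) * d := by
      rw [div_le_iff₀ hd0] at h1
      linarith
    linarith
  have hN1 : 1 ≤ N := by
    rw [hN]
    rw [Nat.one_le_ceil_iff]
    exact div_pos (by linarith) hd0
  have hNle : (N : ℝ) ≤ 4 * m := by
    have h1 : (N:ℝ) < (1 - x) / d + 1 := by
      rw [hN]
      exact Nat.ceil_lt_add_one (div_nonneg (by linarith) hd0.le)
    have h2 : ((1 - x) / d) * x = 10 * (1 - x) := by
      rw [hd]; field_simp
    have hmge : 1 / x ^ 2 ≤ (m:ℝ) := by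
      rw [div_le_iff₀ (by positivity)]
      linarith
    have h3 : ((1 - x) / d + 1) * x ^ 2 ≤ 4 := by
      have hdx : (1 - x) / d = 10 * (1 - x) / x := by
        rw [hd]; field_simp
      rw [hdx]
      have h4 : 10 * (1 - x) / x * x ^ 2 = 10 * (1 - x) * x := by
        field_simp
      rw [add_mul, h4]
      nlinarith
    have h5 : (4:ℝ) ≤ 4 * m * x ^ 2 := by linarith
    nlinarith [sq_nonneg x, pow_pos hx 2]
  -- quantile points and bad events
  set u : ℕ → ℝ := fun k => sInf {t | F t < v k} with hu
  set E : ℕ → Set Ω := fun k =>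
    {ω | G (u k) ≤ v (k - 1) ∧
      2 * x * w k - (v (k - 1) - v k) ≤ G (u k) - Gm (u k) ω} with hE
  -- covering
  have hcov : {ω | 2 * x ≤ ⨆ t : ℝ,
      (if F t = 0 then 0 else (F t - Fm t ω) / Real.sqrt (F t))} ⊆
      ⋃ k ∈ Finset.Icc 1 N, E k := by
    intro ω hω
    simp only [Set.mem_setOf_eq] at hω
    have hAne : (Finset.Icc 1 N).Nonempty := ⟨1, by rw [Finset.mem_Icc]; exact ⟨le_rfl, hN1⟩⟩
    set C : ℕ → ℝ := fun k => if G (u k) ≤ v (k - 1) then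
      (G (u k) + (v (k - 1) - v k) - Gm (u k) ω) / w k else x with hC
    set M : ℝ := (Finset.Icc 1 N).sup' hAne C with hM
    -- pointwise bound on the ratio
    have claim : ∀ t, (if F t = 0 then 0 else (F t - Fm t ω) / Real.sqrt (F t)) ≤ max x M := by
      intro t
      by_cases h0 : F t = 0
      · rw [if_pos h0]
        exact le_max_of_le_left hx.le
      by_cases hsm : F t ≤ x ^ 2
      · refine le_max_of_le_left ?_
        refine (hratio_sqrt ω t).trans ?_
        calc Real.sqrt (F t) ≤ Real.sqrt (x ^ 2) := Real.sqrt_le_sqrt hsm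
          _ = x := Real.sqrt_sq hx.le
      push_neg at hsm
      -- locate the index k
      have hvN : v N < F t := by
        have : v N = x ^ 2 := by simp only [hv, hwN]
        rw [this]; exact hsm
      have hkex : ∃ j, v j < F t := ⟨N, hvN⟩
      set k := Nat.find hkex with hkdef
      have hk : v k < F t := Nat.find_spec hkex
      have hkN : k ≤ N := Nat.find_min' hkex hvN
      have hk1 : 1 ≤ k := by
        by_contra hcon
        push_neg at hcon
        interval_cases k
        · have : v 0 < F t := hk
          have hv0 : v 0 = 1 := by simp only [hv, hw0]; norm_num
          rw [hv0] at this
          linarith [(hF01 t).2]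
      have hprev : ¬ v (k - 1) < F t := Nat.find_min hkex (by omega)
      push_neg at hprev
      -- the set S_k
      have htlb : ∀ t' ∈ {t' | F t' < v k}, t ≤ t' := by
        intro t' ht'
        simp only [Set.mem_setOf_eq] at ht'
        by_contra hcon
        push_neg at hcon
        have := hFmono hcon.le
        linarith
      have hbdd : BddBelow {t' | F t' < v k} := ⟨t, fun t' ht' => htlb t' ht'⟩
      have hvk0 : 0 < v k := by
        simp only [hv]
        exact pow_pos (lt_of_lt_of_le hx (hwx k)) 2
      have hSne : {t' | F t' < v k}.Nonempty := by
        obtain ⟨n, hn⟩ := (hFtop.eventually_lt_const hvk0).exists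
        exact ⟨n, hn⟩
      have htle : t ≤ u k := by
        rw [hu]
        exact le_csInf hSne htlb
      have hFu : F (u k) ≤ v k := by
        apply le_of_tendsto (hright (u k))
        apply Eventually.of_forall
        intro n
        have hpos : (0:ℝ) < 1 / ((n:ℝ) + 1) := by positivity
        obtain ⟨y, hy, hylt⟩ := exists_lt_of_csInf_lt hSne
          (show sInf {t' | F t' < v k} < u k + 1 / ((n:ℝ) + 1) by
            rw [hu] at *; linarith)
        simp only [Set.mem_setOf_eq] at hy
        exact le_of_lt (lt_of_le_of_lt (hFmono hylt.le) hy)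
      have htlt : t < u k := by
        rcases lt_or_eq_of_le htle with h | h
        · exact h
        · exfalso
          rw [← h] at hFu
          linarith
      have hGl : v k ≤ G (u k) := by
        apply ge_of_tendsto (hleft (u k))
        apply Eventually.of_forall
        intro n
        have hpos : (0:ℝ) < 1 / ((n:ℝ) + 1) := by positivity
        have hnot : u k - 1 / ((n:ℝ) + 1) ∉ {t' | F t' < v k} := by
          intro hmem
          have := csInf_le hbdd hmem
          rw [hu] at *
          linarith
        simp only [Set.mem_setOf_eq, not_lt] at hnot
        exact hnot
      have hGu : G (u k) ≤ F t := hGF htlt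
      have hcond : G (u k) ≤ v (k - 1) := hGu.trans hprev
      -- bound the ratio by C k
      rw [if_neg h0]
      have hFt : 0 < F t := lt_of_le_of_ne (hF01 t).1 (Ne.symm h0)
      by_cases hneg : F t - Fm t ω ≤ 0
      · refine le_max_of_le_left ?_
        refine le_trans ?_ hx.le
        exact div_nonpos_iff.mpr (Or.inr ⟨hneg, Real.sqrt_nonneg _⟩)
      push_neg at hneg
      have hwk0 : 0 < w k := lt_of_lt_of_le hx (hwx k)
      have hsq : w k ≤ Real.sqrt (F t) := by
        have h1 : Real.sqrt (v k) = w k := by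
          simp only [hv]
          exact Real.sqrt_sq hwk0.le
        rw [← h1]
        exact Real.sqrt_le_sqrt hk.le
      have hnum : F t - Fm t ω ≤ G (u k) + (v (k - 1) - v k) - Gm (u k) ω := by
        have h1 : Fm t ω ≥ Gm (u k) ω := hFmGm htlt ω
        have h2 : F t ≤ v (k - 1) := hprev
        linarith
      have hstep1 : (F t - Fm t ω) / Real.sqrt (F t) ≤ (F t - Fm t ω) / w k := by
        apply div_le_div_of_nonneg_left hneg.le hwk0 hsq
      have hstep2 : (F t - Fm t ω) / w k ≤
          (G (u k) + (v (k - 1) - v k) - Gm (u k) ω) / w k := by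
        exact (div_le_div_iff_of_pos_right hwk0).mpr hnum
      have hCk : (G (u k) + (v (k - 1) - v k) - Gm (u k) ω) / w k = C k := by
        simp only [hC]
        rw [if_pos hcond]
      have hkmem : k ∈ Finset.Icc 1 N := by rw [Finset.mem_Icc]; exact ⟨hk1, hkN⟩
      calc (F t - Fm t ω) / Real.sqrt (F t)
          ≤ (G (u k) + (v (k - 1) - v k) - Gm (u k) ω) / w k := hstep1.trans hstep2
        _ = C k := hCk
        _ ≤ M := Finset.le_sup' C hkmem
        _ ≤ max x M := le_max_right _ _
    -- conclude
    have hsup : 2 * x ≤ max x M := le_trans hω (ciSup_le claim)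
    have hxM : 2 * x ≤ M := by
      rcases max_cases x M with ⟨heq, _⟩ | ⟨heq, _⟩
      · rw [heq] at hsup; linarith
      · rw [heq] at hsup; exact hsup
    obtain ⟨k, hkmem, hkC⟩ := (Finset.le_sup'_iff hAne).mp hxM
    by_cases hcnd : G (u k) ≤ v (k - 1)
    · have hCval : C k = (G (u k) + (v (k - 1) - v k) - Gm (u k) ω) / w k := by
        simp only [hC]; rw [if_pos hcnd]
      rw [hCval] at hkC
      have hwk0 : 0 < w k := lt_of_lt_of_le hx (hwx k)
      have := (le_div_iff₀ hwk0).mp hkC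
      apply Set.mem_biUnion hkmem
      rw [hE]
      simp only [Set.mem_setOf_eq]
      constructor
      · exact hcnd
      · linarith
    · exfalso
      have : C k = x := by simp only [hC]; rw [if_neg hcnd]
      rw [this] at hkC
      linarith
  -- individual probability bounds
  have hEk : ∀ k ∈ Finset.Icc 1 N, (P (E k)).toReal ≤ Real.exp (-(m:ℝ) * x ^ 2) := by
    intro k hk
    rw [Finset.mem_Icc] at hk
    obtain ⟨hk1, hkN⟩ := hk
    by_cases hcond : G (u k) ≤ v (k - 1)
    · -- Bernstein bound
      set ss : ℝ := 2 * x * w k - (v (k - 1) - v k) with hss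
      have hwk : x ≤ w k := hwx k
      have hwk1 : w (k-1) ≤ w k + d := by
        have := hwstep (k-1)
        rwa [Nat.sub_add_cancel hk1] at this
      have hwk1' : w k ≤ w (k-1) := hwmono _ _ (Nat.sub_le k 1)
      have hv1 : v (k - 1) = w (k - 1) ^ 2 := by simp only [hv]
      have hv2 : v k = w k ^ 2 := by simp only [hv]
      have hwkpos : 0 < w k := lt_of_lt_of_le hx hwk
      have hδ : v (k - 1) - v k ≤ d * (2 * w k + d) := by
        rw [hv1, hv2]
        nlinarith [hwk1, hwk1', mul_le_mul hwk1 (by linarith : w (k-1) + w k ≤ 2 * w k + d)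
          (by linarith : (0:ℝ) ≤ w (k-1) + w k) (by linarith [hd0.le] : (0:ℝ) ≤ w k + d)]
      have hb2 : w (k - 1) ≤ w k + x / 10 := by rw [hd] at hwk1; exact hwk1
      have hδ' : v (k - 1) - v k ≤ x / 10 * (2 * w k + x / 10) := by
        rw [hd] at hδ; exact hδ
      have hL : x * (9 * w k / 5 - x / 100) ≤ ss := by
        rw [hss]; nlinarith [hδ']
      have hL0 : 0 ≤ x * (9 * w k / 5 - x / 100) := by nlinarith [hwk, hx.le]
      have hss0 : 0 ≤ ss := hL0.trans hL
      have hvk1pos : 0 < v (k - 1) := by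
        rw [hv1]
        have : 0 < w (k-1) := lt_of_lt_of_le hx (hwx _)
        positivity
      have hkey : 2 * x ^ 2 * v (k - 1) ≤ ss ^ 2 := by
        have hss2 : (x * (9 * w k / 5 - x / 100)) ^ 2 ≤ ss ^ 2 := by
          nlinarith [hL, hL0]
        have hgoal : 2 * x ^ 2 * w (k - 1) ^ 2 ≤ (x * (9 * w k / 5 - x / 100)) ^ 2 := by
          nlinarith [hb2, hwk, hx.le, sq_nonneg (w k - x), hwkpos.le,
            mul_nonneg (sub_nonneg.mpr hwk) hx.le,
            mul_nonneg (sub_nonneg.mpr hwk) hwkpos.le,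
            mul_nonneg (mul_nonneg hx.le hx.le) hwkpos.le,
            mul_nonneg (mul_nonneg hx.le hwkpos.le) hwkpos.le,
            lt_of_lt_of_le hwkpos hwk1']
        rw [hv1]
        exact hgoal.trans hss2
      -- apply bern
      have hsub : E k ⊆ {ω | ss ≤ G (u k) - (1 / (m:ℝ)) * ∑ j, g (u k) (Y j ω)} := by
        intro ω hω
        rw [hE] at hω
        simp only [Set.mem_setOf_eq] at hω ⊢
        have := hω.2
        rw [hGmdef] at this
        exact this
      have hbern := bern hm P (fun j ω => g (u k) (Y j ω))
        (fun j => (hgmeas (u k)).comp (hYmeas j))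
        (hindep.comp (fun _ => g (u k)) (fun _ => hgmeas (u k)))
        (fun j ω => ⟨(hg01 _ _).1, (hg01 _ _).2⟩)
        (G (u k)) (fun j => hGmean (u k) j)
        (v (k - 1)) ss hvk1pos hcond hss0
      refine le_trans (ENNReal.toReal_mono (measure_ne_top _ _) (measure_mono hsub)) ?_
      refine hbern.trans ?_
      apply Real.exp_le_exp.mpr
      rw [neg_div, neg_mul]
      apply neg_le_neg
      rw [le_div_iff₀ (by positivity)]
      nlinarith [mul_le_mul_of_nonneg_left hkey hm'.le]
    · -- empty event
      have : E k = ∅ := by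
        ext ω
        rw [hE]
        simp only [Set.mem_setOf_eq, Set.mem_empty_iff_false, iff_false]
        intro h
        exact hcond h.1
      rw [this]
      simp only [measure_empty, ENNReal.toReal_zero]
      positivity
  -- assemble
  calc (P {ω | 2 * x ≤ ⨆ t : ℝ,
        (if F t = 0 then 0 else (F t - Fm t ω) / Real.sqrt (F t))}).toReal
      ≤ (P (⋃ k ∈ Finset.Icc 1 N, E k)).toReal := by
        apply ENNReal.toReal_mono (measure_ne_top _ _) (measure_mono hcov)
    _ ≤ ∑ k ∈ Finset.Icc 1 N, (P (E k)).toReal := by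
        refine le_trans (ENNReal.toReal_mono ?_ (measure_biUnion_finset_le _ _)) ?_
        · exact (ENNReal.sum_lt_top.mpr (fun k _ => measure_lt_top _ _)).ne
        · rw [ENNReal.toReal_sum (fun k _ => measure_ne_top _ _)]
    _ ≤ ∑ k ∈ Finset.Icc 1 N, Real.exp (-(m:ℝ) * x ^ 2) := Finset.sum_le_sum hEk
    _ ≤ 2 * (2 * q * m) * Real.exp (-(m : ℝ) * x ^ 2) := by
        rw [Finset.sum_const, Nat.card_Icc]
        have hcard : ((N + 1 - 1 : ℕ) : ℝ) = N := by simp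
        rw [nsmul_eq_mul, hcard]
        apply mul_le_mul_of_nonneg_right _ (Real.exp_pos _).le
        have hq1 : (1:ℝ) ≤ q := by exact_mod_cast hq
        have h5 : (1:ℝ) * m ≤ q * m := mul_le_mul_of_nonneg_right hq1 hm'.le
        nlinarith [h5]
end

section
/- Let F, α, a, b, δ be real numbers with F ≥ 0, α > 0, a ≥ 0, b ≥ 0, and suppose a + b√α ≤ δ ≤ α and F ≤ α − δ + a + b√F. Then F ≤ α. -/
/-- Let F, α, a, b, δ be real numbers with F ≥ 0, α > 0, a ≥ 0, b ≥ 0,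
and suppose a + b√α ≤ δ ≤ α and F ≤ α − δ + a + b√F. Then F ≤ α. -/
theorem stmt13 (F α a b δ : ℝ) (hF : 0 ≤ F) (hα : 0 < α) (ha : 0 ≤ a) (hb : 0 ≤ b)
    (h1 : a + b * Real.sqrt α ≤ δ) (h2 : δ ≤ α)
    (h3 : F ≤ α - δ + a + b * Real.sqrt F) : F ≤ α := by
  by_contra hc
  push_neg at hc
  set s := Real.sqrt α with hs
  set x := Real.sqrt F with hx
  have hs2 : s * s = α := Real.mul_self_sqrt hα.le
  have hx2 : x * x = F := Real.mul_self_sqrt hF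
  have hspos : 0 < s := Real.sqrt_pos.mpr hα
  have hsx : s < x := Real.sqrt_lt_sqrt hα.le hc
  have hbs : b ≤ s := by nlinarith
  nlinarith
end

section
/- Let (a_t)_{t≥1} be a sequence of nonnegative real numbers, let γ ≥ 3/2 and c > 0, and suppose a_1 ≤ 2c and, for every t ≥ 1, a_{t+1} ≤ (1 − γ/(t+1)) a_t + c/(t+1)². Then for every t ≥ 1, a_t ≤ 2c/t. -/
/-- Let (a_t)_{t≥1} be nonnegative reals, γ ≥ 3/2, c > 0, with a_1 ≤ 2c and
a_{t+1} ≤ (1 − γ/(t+1)) a_t + c/(t+1)² for all t ≥ 1. Then a_t ≤ 2c/t for all t ≥ 1. -/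
theorem stmt14 (a : ℕ → ℝ) (γ c : ℝ) (hγ : 3 / 2 ≤ γ) (hc : 0 < c)
    (hnn : ∀ t : ℕ, 1 ≤ t → 0 ≤ a t) (h1 : a 1 ≤ 2 * c)
    (hrec : ∀ t : ℕ, 1 ≤ t →
      a (t + 1) ≤ (1 - γ / ((t : ℝ) + 1)) * a t + c / ((t : ℝ) + 1) ^ 2) :
    ∀ t : ℕ, 1 ≤ t → a t ≤ 2 * c / (t : ℝ) := by
  intro t ht
  induction t with
  | zero => omega
  | succ n ih =>
    rcases Nat.lt_or_ge 1 (n + 1) with h | h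
    · have hn : 1 ≤ n := by omega
      have ihn := ih hn
      have hr := hrec n hn
      have hT : (1 : ℝ) ≤ (n : ℝ) := by exact_mod_cast hn
      have hTpos : (0 : ℝ) < (n : ℝ) := by linarith
      have hT1 : (0 : ℝ) < (n : ℝ) + 1 := by linarith
      have hann := hnn n hn
      push_cast
      rcases le_or_gt (1 - γ / ((n : ℝ) + 1)) 0 with hneg | hpos
      · have h0 : (1 - γ / ((n : ℝ) + 1)) * a n ≤ 0 := mul_nonpos_of_nonpos_of_nonneg hneg hann
        have h2 : a (n + 1) ≤ c / ((n : ℝ) + 1) ^ 2 := by linarith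
        have h3 : c / ((n : ℝ) + 1) ^ 2 ≤ 2 * c / ((n : ℝ) + 1) := by
          rw [div_le_div_iff₀ (by positivity) hT1]
          nlinarith [mul_pos hc hT1, mul_pos (mul_pos hc hT1) hT1]
        linarith
      · have hmul : (1 - γ / ((n : ℝ) + 1)) * a n ≤ (1 - γ / ((n : ℝ) + 1)) * (2 * c / (n : ℝ)) :=
          mul_le_mul_of_nonneg_left ihn hpos.le
        have hγ' : 3 / (2 * ((n : ℝ) + 1)) ≤ γ / ((n : ℝ) + 1) := by
          rw [div_le_div_iff₀ (by positivity) hT1]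
          nlinarith
        have step : (1 - γ / ((n : ℝ) + 1)) * (2 * c / (n : ℝ))
            ≤ (1 - 3 / (2 * ((n : ℝ) + 1))) * (2 * c / (n : ℝ)) :=
          mul_le_mul_of_nonneg_right (by linarith) (by positivity)
        have hdiff : 2 * c / ((n : ℝ) + 1)
            - ((1 - 3 / (2 * ((n : ℝ) + 1))) * (2 * c / (n : ℝ)) + c / ((n : ℝ) + 1) ^ 2)
            = c / ((n : ℝ) * ((n : ℝ) + 1) ^ 2) := by
          field_simp
          ring
        have hd : (0 : ℝ) < c / ((n : ℝ) * ((n : ℝ) + 1) ^ 2) := by positivity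
        have key : (1 - γ / ((n : ℝ) + 1)) * (2 * c / (n : ℝ)) + c / ((n : ℝ) + 1) ^ 2
            ≤ 2 * c / ((n : ℝ) + 1) := by linarith
        linarith
    · have hn0 : n = 0 := by omega
      subst hn0
      simpa using h1
end
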